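/- arXiv:2306.13184 — 5 statements merged into one kernel-verified Lean document; each statement's English description precedes it below -/
import Mathlib

section
/- Let W be independent of (X,Y). If a random variable U satisfies I(U;X) = ε and H(Y|U,X,W) = 0, then H(U) ≥ H(Y|X) − H(X|Y) + ε. -/
/-- Shannon entropy (base 2) of a finitely supported distribution given as a function. -/
noncomputable def ent {α : Type*} [Fintype α] (q : α → ℝ) : ℝ :=
  - ∑ a, q a * Real.logb 2 (q a)


lemma gibbs {α : Type*} [Fintype α] (q r : α → ℝ)
    (hq : ∀ a, 0 ≤ q a) (hr : ∀ a, 0 ≤ r a)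
    (hq1 : ∑ a, q a = 1) (hr1 : ∑ a, r a ≤ 1)
    (hsupp : ∀ a, 0 < q a → 0 < r a) :
    ∑ a, q a * Real.logb 2 (r a) ≤ ∑ a, q a * Real.logb 2 (q a) := by
  have hlog2 : (0:ℝ) < Real.log 2 := Real.log_pos one_lt_two
  have key : ∀ a, q a * Real.logb 2 (r a) - q a * Real.logb 2 (q a)
      ≤ (r a - q a) / Real.log 2 := by
    intro a
    rcases eq_or_lt_of_le (hq a) with h | h
    · rw [← h]
      simp only [zero_mul, sub_zero, sub_self]
      exact div_nonneg (by simpa using hr a) hlog2.le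
    · have hra := hsupp a h
      have hdiv : Real.logb 2 (r a) - Real.logb 2 (q a) = Real.logb 2 (r a / q a) := by
        rw [Real.logb_div (ne_of_gt hra) (ne_of_gt h)]
      have hle : Real.log (r a / q a) ≤ r a / q a - 1 :=
        Real.log_le_sub_one_of_pos (div_pos hra h)
      have : q a * Real.logb 2 (r a) - q a * Real.logb 2 (q a)
          = q a * (Real.log (r a / q a) / Real.log 2) := by
        rw [← mul_sub, hdiv, Real.logb]
      rw [this]
      calc q a * (Real.log (r a / q a) / Real.log 2)
          ≤ q a * ((r a / q a - 1) / Real.log 2) := by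
            apply mul_le_mul_of_nonneg_left _ h.le
            gcongr
        _ = (r a - q a) / Real.log 2 := by
            field_simp
  have hsumle : ∑ a, (q a * Real.logb 2 (r a) - q a * Real.logb 2 (q a))
      ≤ ∑ a, (r a - q a) / Real.log 2 := Finset.sum_le_sum fun a _ => key a
  rw [Finset.sum_sub_distrib] at hsumle
  have : ∑ a, (r a - q a) / Real.log 2 = ((∑ a, r a) - 1) / Real.log 2 := by
    rw [← Finset.sum_div, Finset.sum_sub_distrib, hq1]
  rw [this] at hsumle
  have hle0 : ((∑ a, r a) - 1) / Real.log 2 ≤ 0 :=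
    div_nonpos_of_nonpos_of_nonneg (by linarith) hlog2.le
  linarith

lemma single_le_sum' {β : Type*} [Fintype β] (f : β → ℝ) (hf : ∀ b, 0 ≤ f b) (b : β) :
    f b ≤ ∑ b', f b' :=
  Finset.single_le_sum (fun b _ => hf b) (Finset.mem_univ b)

/-- If `W ⊥ (X,Y)`, `I(U;X) = ε` and `H(Y|U,X,W) = 0`, then
`H(U) ≥ H(Y|X) − H(X|Y) + ε`. -/
theorem stmt2 {X Y W U : Type*} [Fintype X] [Fintype Y] [Fintype W] [Fintype U]
    (p : X × Y × W × U → ℝ) (hpos : ∀ z, 0 ≤ p z) (hsum : ∑ z, p z = 1)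
    (pX : X → ℝ) (hpX : ∀ x, pX x = ∑ y, ∑ w, ∑ u, p (x, y, w, u))
    (pY : Y → ℝ) (hpY : ∀ y, pY y = ∑ x, ∑ w, ∑ u, p (x, y, w, u))
    (pW : W → ℝ) (hpW : ∀ w, pW w = ∑ x, ∑ y, ∑ u, p (x, y, w, u))
    (pU : U → ℝ) (hpU : ∀ u, pU u = ∑ x, ∑ y, ∑ w, p (x, y, w, u))
    (pXY : X × Y → ℝ) (hpXY : ∀ x y, pXY (x, y) = ∑ w, ∑ u, p (x, y, w, u))
    (pXU : X × U → ℝ) (hpXU : ∀ x u, pXU (x, u) = ∑ y, ∑ w, p (x, y, w, u))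
    (pXWU : X × W × U → ℝ) (hpXWU : ∀ x w u, pXWU (x, w, u) = ∑ y, p (x, y, w, u))
    -- W is independent of (X,Y)
    (hindep : ∀ x y w, (∑ u, p (x, y, w, u)) = pXY (x, y) * pW w)
    (ε : ℝ) (hε : 0 ≤ ε)
    -- I(U;X) = ε
    (hI : ent pU + ent pX - ent pXU = ε)
    -- H(Y|U,X,W) = 0
    (hH : ent p - ent pXWU = 0) :
    -- H(U) ≥ H(Y|X) − H(X|Y) + ε
    ent pU ≥ (ent pXY - ent pX) - (ent pXY - ent pY) + ε := by
  -- nonnegativity of marginals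
  have hpXWUnn : ∀ z : X × W × U, 0 ≤ pXWU z := by
    rintro ⟨x, w, u⟩
    rw [hpXWU]
    exact Finset.sum_nonneg fun y _ => hpos _
  have hpXUnn : ∀ z : X × U, 0 ≤ pXU z := by
    rintro ⟨x, u⟩
    rw [hpXU]
    exact Finset.sum_nonneg fun y _ => Finset.sum_nonneg fun w _ => hpos _
  have hpWnn : ∀ w, 0 ≤ pW w := by
    intro w
    rw [hpW]
    exact Finset.sum_nonneg fun _ _ => Finset.sum_nonneg fun _ _ =>
      Finset.sum_nonneg fun _ _ => hpos _
  have hpYnn : ∀ y, 0 ≤ pY y := by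
    intro y
    rw [hpY]
    exact Finset.sum_nonneg fun _ _ => Finset.sum_nonneg fun _ _ =>
      Finset.sum_nonneg fun _ _ => hpos _
  -- total sum as iterated sum
  have hsum' : ∑ x, ∑ y, ∑ w, ∑ u, p (x, y, w, u) = 1 := by
    simpa [Fintype.sum_prod_type] using hsum
  -- marginal sums equal to one
  have hpW1 : ∑ w, pW w = 1 := by
    calc ∑ w, pW w = ∑ w, ∑ x, ∑ y, ∑ u, p (x, y, w, u) := by simp [hpW]
      _ = ∑ x, ∑ w, ∑ y, ∑ u, p (x, y, w, u) := Finset.sum_comm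
      _ = ∑ x, ∑ y, ∑ w, ∑ u, p (x, y, w, u) :=
          Finset.sum_congr rfl fun x _ => Finset.sum_comm
      _ = 1 := hsum'
  have hpXU1 : ∑ z : X × U, pXU z = 1 := by
    calc ∑ z : X × U, pXU z = ∑ x, ∑ u, ∑ y, ∑ w, p (x, y, w, u) := by
          simp [Fintype.sum_prod_type, hpXU]
      _ = ∑ x, ∑ y, ∑ u, ∑ w, p (x, y, w, u) :=
          Finset.sum_congr rfl fun x _ => Finset.sum_comm
      _ = ∑ x, ∑ y, ∑ w, ∑ u, p (x, y, w, u) :=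
          Finset.sum_congr rfl fun x _ => Finset.sum_congr rfl fun y _ => Finset.sum_comm
      _ = 1 := hsum'
  -- marginals of pXWU
  have he1 : ∀ x u, ∑ w, pXWU (x, w, u) = pXU (x, u) := by
    intro x u
    rw [hpXU]
    simp only [hpXWU]
    exact Finset.sum_comm
  have he2 : ∀ w, ∑ x, ∑ u, pXWU (x, w, u) = pW w := by
    intro w
    rw [hpW]
    simp only [hpXWU]
    refine Finset.sum_congr rfl fun x _ => ?_
    exact Finset.sum_comm
  -- independence: pY y * pW w is the (Y,W)-marginal
  have hpYalt : ∀ y, pY y = ∑ x, pXY (x, y) := by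
    intro y
    rw [hpY]
    calc ∑ x, ∑ w, ∑ u, p (x, y, w, u) = ∑ x, ∑ w, pXY (x, y) * pW w := by
          simp only [hindep]
      _ = ∑ x, pXY (x, y) * ∑ w, pW w := by
          refine Finset.sum_congr rfl fun x _ => ?_
          rw [Finset.mul_sum]
      _ = ∑ x, pXY (x, y) := by simp [hpW1]
  have hYW : ∀ y w, ∑ x, ∑ u, p (x, y, w, u) = pY y * pW w := by
    intro y w
    calc ∑ x, ∑ u, p (x, y, w, u) = ∑ x, pXY (x, y) * pW w := by simp only [hindep]
      _ = (∑ x, pXY (x, y)) * pW w := by rw [Finset.sum_mul]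
      _ = pY y * pW w := by rw [← hpYalt]
  -- pointwise domination facts
  have hdom1 : ∀ x w u, pXWU (x, w, u) ≤ pXU (x, u) := by
    intro x w u
    rw [hpXWU, hpXU]
    exact Finset.sum_le_sum fun y _ => single_le_sum' (fun w' => p (x, y, w', u)) (fun w' => hpos _) w
  have hdom2 : ∀ x w u, pXWU (x, w, u) ≤ pW w := by
    intro x w u
    rw [hpXWU, hpW]
    calc ∑ y, p (x, y, w, u) ≤ ∑ y, ∑ u', p (x, y, w, u') :=
          Finset.sum_le_sum fun y _ => single_le_sum' (fun u' => p (x, y, w, u')) (fun u' => hpos _) u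
      _ ≤ ∑ x', ∑ y, ∑ u', p (x', y, w, u') :=
          single_le_sum' (fun x' => ∑ y, ∑ u', p (x', y, w, u'))
            (fun x' => Finset.sum_nonneg fun _ _ => Finset.sum_nonneg fun _ _ => hpos _) x
  have hdomY : ∀ x y w u, p (x, y, w, u) ≤ pY y * pW w := by
    intro x y w u
    rw [← hYW]
    calc p (x, y, w, u) ≤ ∑ u', p (x, y, w, u') := single_le_sum' (fun u' => p (x, y, w, u')) (fun _ => hpos _) u
      _ ≤ ∑ x', ∑ u', p (x', y, w, u') :=
          single_le_sum' (fun x' => ∑ u', p (x', y, w, u'))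
            (fun _ => Finset.sum_nonneg fun _ _ => hpos _) x
  have hdomYa : ∀ x y w u, p (x, y, w, u) ≤ pY y := by
    intro x y w u
    rw [hpY]
    calc p (x, y, w, u) ≤ ∑ u', p (x, y, w, u') := single_le_sum' (fun u' => p (x, y, w, u')) (fun _ => hpos _) u
      _ ≤ ∑ w', ∑ u', p (x, y, w', u') :=
          single_le_sum' (fun w' => ∑ u', p (x, y, w', u'))
            (fun _ => Finset.sum_nonneg fun _ _ => hpos _) w
      _ ≤ ∑ x', ∑ w', ∑ u', p (x', y, w', u') :=
          single_le_sum' (fun x' => ∑ w', ∑ u', p (x', y, w', u'))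
            (fun _ => Finset.sum_nonneg fun _ _ => Finset.sum_nonneg fun _ _ => hpos _) x
  have hdomWa : ∀ x y w u, p (x, y, w, u) ≤ pW w := by
    intro x y w u
    exact (hdom2 x w u).trans' (by
      rw [hpXWU]
      exact single_le_sum' (fun y' => p (x, y', w, u)) (fun _ => hpos _) y)
  -- Step A : ent pXWU ≤ ent pXU + ent pW  (subadditivity via Gibbs)
  have hA : ent pXWU ≤ ent pXU + ent pW := by
    have hg := gibbs (α := X × W × U) pXWU (fun z => pXU (z.1, z.2.2) * pW z.2.1)
      hpXWUnn (fun z => mul_nonneg (hpXUnn _) (hpWnn _))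
      (by
        calc ∑ z : X × W × U, pXWU z
            = ∑ x, ∑ w, ∑ u, pXWU (x, w, u) := by simp [Fintype.sum_prod_type]
          _ = ∑ x, ∑ u, ∑ w, pXWU (x, w, u) :=
              Finset.sum_congr rfl fun x _ => Finset.sum_comm
          _ = ∑ x, ∑ u, pXU (x, u) := by simp only [he1]
          _ = 1 := by simpa [Fintype.sum_prod_type] using hpXU1)
      (le_of_eq (by
        calc ∑ z : X × W × U, pXU (z.1, z.2.2) * pW z.2.1
            = ∑ x, ∑ w, ∑ u, pXU (x, u) * pW w := by simp [Fintype.sum_prod_type]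
          _ = ∑ x, ∑ w, (∑ u, pXU (x, u)) * pW w := by
              refine Finset.sum_congr rfl fun x _ => Finset.sum_congr rfl fun w _ => ?_
              rw [Finset.sum_mul]
          _ = ∑ x, (∑ u, pXU (x, u)) * ∑ w, pW w := by
              refine Finset.sum_congr rfl fun x _ => ?_
              rw [Finset.mul_sum]
          _ = ∑ x, ∑ u, pXU (x, u) := by simp [hpW1]
          _ = 1 := by simpa [Fintype.sum_prod_type] using hpXU1))
      (by
        rintro ⟨x, w, u⟩ h
        exact mul_pos (h.trans_le (hdom1 x w u)) (h.trans_le (hdom2 x w u)))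
    -- rewrite the left side of hg
    have hsplit : ∑ z : X × W × U, pXWU z * Real.logb 2 (pXU (z.1, z.2.2) * pW z.2.1)
        = (∑ z : X × U, pXU z * Real.logb 2 (pXU z)) + ∑ w, pW w * Real.logb 2 (pW w) := by
      calc ∑ z : X × W × U, pXWU z * Real.logb 2 (pXU (z.1, z.2.2) * pW z.2.1)
          = ∑ z : X × W × U, (pXWU z * Real.logb 2 (pXU (z.1, z.2.2))
              + pXWU z * Real.logb 2 (pW z.2.1)) := by
            refine Finset.sum_congr rfl fun z _ => ?_
            obtain ⟨x, w, u⟩ := z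
            rcases eq_or_lt_of_le (hpXWUnn (x, w, u)) with h | h
            · simp [← h]
            · rw [Real.logb_mul (ne_of_gt (h.trans_le (hdom1 x w u)))
                (ne_of_gt (h.trans_le (hdom2 x w u))), mul_add]
        _ = (∑ z : X × W × U, pXWU z * Real.logb 2 (pXU (z.1, z.2.2)))
            + ∑ z : X × W × U, pXWU z * Real.logb 2 (pW z.2.1) := Finset.sum_add_distrib
        _ = (∑ z : X × U, pXU z * Real.logb 2 (pXU z)) + ∑ w, pW w * Real.logb 2 (pW w) := by
            congr 1
            · calc ∑ z : X × W × U, pXWU z * Real.logb 2 (pXU (z.1, z.2.2))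
                  = ∑ x, ∑ w, ∑ u, pXWU (x, w, u) * Real.logb 2 (pXU (x, u)) := by
                    simp [Fintype.sum_prod_type]
                _ = ∑ x, ∑ u, ∑ w, pXWU (x, w, u) * Real.logb 2 (pXU (x, u)) :=
                    Finset.sum_congr rfl fun x _ => Finset.sum_comm
                _ = ∑ x, ∑ u, pXU (x, u) * Real.logb 2 (pXU (x, u)) := by
                    refine Finset.sum_congr rfl fun x _ => Finset.sum_congr rfl fun u _ => ?_
                    rw [← Finset.sum_mul, he1]
                _ = ∑ z : X × U, pXU z * Real.logb 2 (pXU z) := by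
                    simp [Fintype.sum_prod_type]
            · calc ∑ z : X × W × U, pXWU z * Real.logb 2 (pW z.2.1)
                  = ∑ x, ∑ w, ∑ u, pXWU (x, w, u) * Real.logb 2 (pW w) := by
                    simp [Fintype.sum_prod_type]
                _ = ∑ w, ∑ x, ∑ u, pXWU (x, w, u) * Real.logb 2 (pW w) := Finset.sum_comm
                _ = ∑ w, pW w * Real.logb 2 (pW w) := by
                    refine Finset.sum_congr rfl fun w _ => ?_
                    rw [← he2 w, Finset.sum_mul]
                    exact Finset.sum_congr rfl fun x _ => (Finset.sum_mul _ _ _).symm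
        _ = _ := rfl
    rw [hsplit] at hg
    unfold ent
    linarith
  -- Step B : ent p ≥ ent pY + ent pW
  have hB : ent pY + ent pW ≤ ent p := by
    have hmono : ∑ z : X × Y × W × U, p z * Real.logb 2 (p z)
        ≤ ∑ z : X × Y × W × U, p z * Real.logb 2 (pY z.2.1 * pW z.2.2.1) := by
      refine Finset.sum_le_sum fun z _ => ?_
      obtain ⟨x, y, w, u⟩ := z
      rcases eq_or_lt_of_le (hpos (x, y, w, u)) with h | h
      · simp [← h]
      · exact mul_le_mul_of_nonneg_left
          (Real.logb_le_logb_of_le one_lt_two h (hdomY x y w u)) h.le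
    have hsplit : ∑ z : X × Y × W × U, p z * Real.logb 2 (pY z.2.1 * pW z.2.2.1)
        = (∑ y, pY y * Real.logb 2 (pY y)) + ∑ w, pW w * Real.logb 2 (pW w) := by
      calc ∑ z : X × Y × W × U, p z * Real.logb 2 (pY z.2.1 * pW z.2.2.1)
          = ∑ z : X × Y × W × U, (p z * Real.logb 2 (pY z.2.1)
              + p z * Real.logb 2 (pW z.2.2.1)) := by
            refine Finset.sum_congr rfl fun z _ => ?_
            obtain ⟨x, y, w, u⟩ := z
            rcases eq_or_lt_of_le (hpos (x, y, w, u)) with h | h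
            · simp [← h]
            · rw [Real.logb_mul (ne_of_gt (h.trans_le (hdomYa x y w u)))
                (ne_of_gt (h.trans_le (hdomWa x y w u))), mul_add]
        _ = (∑ z : X × Y × W × U, p z * Real.logb 2 (pY z.2.1))
            + ∑ z : X × Y × W × U, p z * Real.logb 2 (pW z.2.2.1) := Finset.sum_add_distrib
        _ = (∑ y, pY y * Real.logb 2 (pY y)) + ∑ w, pW w * Real.logb 2 (pW w) := by
            congr 1
            · calc ∑ z : X × Y × W × U, p z * Real.logb 2 (pY z.2.1)
                  = ∑ x, ∑ y, ∑ w, ∑ u, p (x, y, w, u) * Real.logb 2 (pY y) := by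
                    simp [Fintype.sum_prod_type]
                _ = ∑ y, ∑ x, ∑ w, ∑ u, p (x, y, w, u) * Real.logb 2 (pY y) :=
                    Finset.sum_comm
                _ = ∑ y, pY y * Real.logb 2 (pY y) := by
                    refine Finset.sum_congr rfl fun y _ => ?_
                    rw [hpY]
                    rw [Finset.sum_mul]
                    refine Finset.sum_congr rfl fun x _ => ?_
                    rw [Finset.sum_mul]
                    refine Finset.sum_congr rfl fun w _ => ?_
                    rw [Finset.sum_mul]
            · calc ∑ z : X × Y × W × U, p z * Real.logb 2 (pW z.2.2.1)
                  = ∑ x, ∑ y, ∑ w, ∑ u, p (x, y, w, u) * Real.logb 2 (pW w) := by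
                    simp [Fintype.sum_prod_type]
                _ = ∑ x, ∑ w, ∑ y, ∑ u, p (x, y, w, u) * Real.logb 2 (pW w) :=
                    Finset.sum_congr rfl fun x _ => Finset.sum_comm
                _ = ∑ w, ∑ x, ∑ y, ∑ u, p (x, y, w, u) * Real.logb 2 (pW w) :=
                    Finset.sum_comm
                _ = ∑ w, pW w * Real.logb 2 (pW w) := by
                    refine Finset.sum_congr rfl fun w _ => ?_
                    rw [hpW]
                    rw [Finset.sum_mul]
                    refine Finset.sum_congr rfl fun x _ => ?_
                    rw [Finset.sum_mul]
                    refine Finset.sum_congr rfl fun y _ => ?_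
                    rw [Finset.sum_mul]
    rw [hsplit] at hmono
    unfold ent
    linarith
  -- finish
  have hHeq : ent p = ent pXWU := by linarith
  linarith
end

section
/- Let W be independent of (X,Y). If a random variable U satisfies I(U;X) = ε and H(Y|U,X,W) = 0, then H(U) ≥ H(Y|X). -/
lemma ent_congr {α : Type*} [Fintype α] {f g : α → ℝ} (h : ∀ a, f a = g a) :
    ent f = ent g := by
  unfold ent; congr 1; exact Finset.sum_congr rfl fun a _ => by rw [h]

lemma ent_reindex {α β : Type*} [Fintype α] [Fintype β] (e : β ≃ α) (q : α → ℝ) :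
    ent (fun b => q (e b)) = ent q := by
  unfold ent; congr 1
  exact Fintype.sum_equiv e _ _ (fun b => rfl)

/-- marginal entropy ≤ joint entropy -/
lemma ent_marginal_le {α β : Type*} [Fintype α] [Fintype β] (f : α × β → ℝ)
    (h0 : ∀ z, 0 ≤ f z) : ent (fun a => ∑ b, f (a, b)) ≤ ent f := by
  unfold ent
  rw [neg_le_neg_iff, Fintype.sum_prod_type]
  refine Finset.sum_le_sum fun a _ => ?_
  have hqa : ∀ b : β, f (a, b) ≤ ∑ b, f (a, b) := fun b =>
    Finset.single_le_sum (fun b _ => h0 (a, b)) (Finset.mem_univ b)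
  calc ∑ b, f (a, b) * Real.logb 2 (f (a, b))
      ≤ ∑ b, f (a, b) * Real.logb 2 (∑ b, f (a, b)) := by
        refine Finset.sum_le_sum fun b _ => ?_
        rcases eq_or_lt_of_le (h0 (a, b)) with h | h
        · simp [← h]
        · exact mul_le_mul_of_nonneg_left
            (Real.logb_le_logb_of_le one_lt_two h (hqa b)) (h0 (a, b))
    _ = (∑ b, f (a, b)) * Real.logb 2 (∑ b, f (a, b)) := by
        rw [← Finset.sum_mul]

/-- entropy of a product distribution -/
lemma ent_prod {α β : Type*} [Fintype α] [Fintype β] (qa : α → ℝ) (qb : β → ℝ)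
    (ha : ∑ a, qa a = 1) (hb : ∑ b, qb b = 1) :
    ent (fun z : α × β => qa z.1 * qb z.2) = ent qa + ent qb := by
  unfold ent
  rw [Fintype.sum_prod_type]
  have key : ∀ a b, qa a * qb b * Real.logb 2 (qa a * qb b)
      = qb b * (qa a * Real.logb 2 (qa a)) + qa a * (qb b * Real.logb 2 (qb b)) := by
    intro a b
    rcases eq_or_ne (qa a) 0 with h | h; · simp [h]
    rcases eq_or_ne (qb b) 0 with h' | h'; · simp [h']
    rw [Real.logb_mul h h']; ring
  simp only [key, Finset.sum_add_distrib, ← Finset.mul_sum, ← Finset.sum_mul]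
  rw [ha, hb]; ring

/-- subadditivity: H(A,B) ≤ H(A) + H(B) -/
lemma ent_subadd {α β : Type*} [Fintype α] [Fintype β] (f : α × β → ℝ)
    (h0 : ∀ z, 0 ≤ f z) (h1 : ∑ z, f z = 1) :
    ent f ≤ ent (fun a => ∑ b, f (a, b)) + ent (fun b => ∑ a, f (a, b)) := by
  set qa : α → ℝ := fun a => ∑ b, f (a, b) with hqa
  set qb : β → ℝ := fun b => ∑ a, f (a, b) with hqb
  have hqa0 : ∀ a, 0 ≤ qa a := fun a => Finset.sum_nonneg fun b _ => h0 (a, b)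
  have hqb0 : ∀ b, 0 ≤ qb b := fun b => Finset.sum_nonneg fun a _ => h0 (a, b)
  have hfa : ∀ z : α × β, f z ≤ qa z.1 := fun z =>
    Finset.single_le_sum (fun b _ => h0 (z.1, b)) (Finset.mem_univ z.2)
  have hfb : ∀ z : α × β, f z ≤ qb z.2 := fun z =>
    Finset.single_le_sum (fun a _ => h0 (a, z.2)) (Finset.mem_univ z.1)
  have hsa : ∑ a, qa a = 1 := by rw [← h1, Fintype.sum_prod_type]
  have hsb : ∑ b, qb b = 1 := by
    rw [← h1, Fintype.sum_prod_type, Finset.sum_comm]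
  have h2 : (0:ℝ) < Real.log 2 := Real.log_pos one_lt_two
  -- Gibbs: ∑ f log f ≥ ∑ f log (qa * qb)
  have gibbs : ∑ z, f z * Real.logb 2 (qa z.1 * qb z.2) ≤ ∑ z, f z * Real.logb 2 (f z) := by
    have key : ∀ z, f z * Real.logb 2 (qa z.1 * qb z.2) - f z * Real.logb 2 (f z)
        ≤ (qa z.1 * qb z.2 - f z) / Real.log 2 := by
      intro z
      rcases eq_or_lt_of_le (h0 z) with h | h
      · rw [← h]
        simp only [zero_mul, sub_zero, sub_self]
        exact div_nonneg (mul_nonneg (hqa0 _) (hqb0 _)) h2.le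
      · have hq1 : 0 < qa z.1 := lt_of_lt_of_le h (hfa z)
        have hq2 : 0 < qb z.2 := lt_of_lt_of_le h (hfb z)
        have hlog : Real.log (qa z.1 * qb z.2) - Real.log (f z)
            ≤ qa z.1 * qb z.2 / f z - 1 := by
          have := Real.log_le_sub_one_of_pos (show (0:ℝ) < qa z.1 * qb z.2 / f z by positivity)
          rwa [Real.log_div (by positivity) (ne_of_gt h)] at this
        have hmul : f z * Real.log (qa z.1 * qb z.2) - f z * Real.log (f z)
            ≤ qa z.1 * qb z.2 - f z := by
          have h' := mul_le_mul_of_nonneg_left hlog h.le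
          have heq : f z * (qa z.1 * qb z.2 / f z - 1) = qa z.1 * qb z.2 - f z := by
            field_simp
          nlinarith
        simp only [Real.logb]
        rw [show f z * (Real.log (qa z.1 * qb z.2) / Real.log 2)
            - f z * (Real.log (f z) / Real.log 2)
            = (f z * Real.log (qa z.1 * qb z.2) - f z * Real.log (f z)) / Real.log 2 by ring]
        exact div_le_div_of_nonneg_right hmul h2.le |>.trans_eq rfl
    have hsum2 := Finset.sum_le_sum (fun z (_ : z ∈ Finset.univ) => key z)
    rw [Finset.sum_sub_distrib] at hsum2
    have hprod : ∑ z : α × β, qa z.1 * qb z.2 = 1 := by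
      rw [Fintype.sum_prod_type]
      simp only [← Finset.mul_sum, hsb, mul_one, hsa]
    have hrhs : ∑ z : α × β, (qa z.1 * qb z.2 - f z) / Real.log 2 = 0 := by
      rw [← Finset.sum_div, Finset.sum_sub_distrib, hprod, h1, sub_self, zero_div]
    linarith
  -- split the cross term
  have hsplit : ∑ z, f z * Real.logb 2 (qa z.1 * qb z.2)
      = ∑ a, qa a * Real.logb 2 (qa a) + ∑ b, qb b * Real.logb 2 (qb b) := by
    have key : ∀ z : α × β, f z * Real.logb 2 (qa z.1 * qb z.2)
        = f z * Real.logb 2 (qa z.1) + f z * Real.logb 2 (qb z.2) := by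
      intro z
      rcases eq_or_lt_of_le (h0 z) with h | h
      · rw [← h]; ring
      · rw [Real.logb_mul (ne_of_gt (lt_of_lt_of_le h (hfa z)))
          (ne_of_gt (lt_of_lt_of_le h (hfb z)))]; ring
    simp only [key, Finset.sum_add_distrib]
    congr 1
    · rw [Fintype.sum_prod_type]
      refine Finset.sum_congr rfl fun a _ => ?_
      show ∑ y, f (a, y) * Real.logb 2 (qa a) = qa a * Real.logb 2 (qa a)
      rw [← Finset.sum_mul]
    · rw [Fintype.sum_prod_type, Finset.sum_comm]
      refine Finset.sum_congr rfl fun b _ => ?_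
      show ∑ x, f (x, b) * Real.logb 2 (qb b) = qb b * Real.logb 2 (qb b)
      rw [← Finset.sum_mul]
  unfold ent
  linarith

def eAssoc4 {X Y W U : Type*} : (X × Y × W) × U ≃ X × Y × W × U :=
  ⟨fun z => (z.1.1, z.1.2.1, z.1.2.2, z.2), fun z => ((z.1, z.2.1, z.2.2.1), z.2.2.2),
    fun _ => rfl, fun _ => rfl⟩

def eAssoc3 {X W U : Type*} : (X × W) × U ≃ X × W × U :=
  ⟨fun z => (z.1.1, z.1.2, z.2), fun z => ((z.1, z.2.1), z.2.2), fun _ => rfl, fun _ => rfl⟩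

/-- If `W ⊥ (X,Y)`, `I(U;X) = ε` and `H(Y|U,X,W) = 0`, then `H(U) ≥ H(Y|X)`. -/
theorem stmt3 {X Y W U : Type*} [Fintype X] [Fintype Y] [Fintype W] [Fintype U]
    (p : X × Y × W × U → ℝ) (hpos : ∀ z, 0 ≤ p z) (hsum : ∑ z, p z = 1)
    (pX : X → ℝ) (hpX : ∀ x, pX x = ∑ y, ∑ w, ∑ u, p (x, y, w, u))
    (pW : W → ℝ) (hpW : ∀ w, pW w = ∑ x, ∑ y, ∑ u, p (x, y, w, u))
    (pU : U → ℝ) (hpU : ∀ u, pU u = ∑ x, ∑ y, ∑ w, p (x, y, w, u))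
    (pXY : X × Y → ℝ) (hpXY : ∀ x y, pXY (x, y) = ∑ w, ∑ u, p (x, y, w, u))
    (pXU : X × U → ℝ) (hpXU : ∀ x u, pXU (x, u) = ∑ y, ∑ w, p (x, y, w, u))
    (pXWU : X × W × U → ℝ) (hpXWU : ∀ x w u, pXWU (x, w, u) = ∑ y, p (x, y, w, u))
    -- W is independent of (X,Y)
    (hindep : ∀ x y w, (∑ u, p (x, y, w, u)) = pXY (x, y) * pW w)
    (ε : ℝ) (hε : 0 ≤ ε)
    -- I(U;X) = ε
    (hI : ent pU + ent pX - ent pXU = ε)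
    -- H(Y|U,X,W) = 0
    (hH : ent p - ent pXWU = 0) :
    -- H(U) ≥ H(Y|X)
    ent pU ≥ ent pXY - ent pX := by
  have hsum' : ∑ x, ∑ y, ∑ w, ∑ u, p (x, y, w, u) = 1 := by
    simpa [Fintype.sum_prod_type] using hsum
  have sX : ∑ x, pX x = 1 := by simp only [hpX]; exact hsum'
  have sW : ∑ w, pW w = 1 := by
    simp only [hpW]
    rw [Finset.sum_comm, ← hsum']
    exact Finset.sum_congr rfl fun x _ => Finset.sum_comm
  have sXY : ∑ z : X × Y, pXY z = 1 := by
    rw [Fintype.sum_prod_type, ← hsum']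
    exact Finset.sum_congr rfl fun x _ => Finset.sum_congr rfl fun y _ => hpXY x y
  have hpXrel : ∀ x, pX x = ∑ y, pXY (x, y) := by
    intro x
    rw [hpX]
    refine Finset.sum_congr rfl fun y _ => ?_
    calc ∑ w, ∑ u, p (x, y, w, u) = ∑ w, pXY (x, y) * pW w :=
          Finset.sum_congr rfl fun w _ => hindep x y w
      _ = pXY (x, y) * ∑ w, pW w := by rw [Finset.mul_sum]
      _ = pXY (x, y) := by rw [sW, mul_one]
  -- the joint distributions re-associated
  set A : X × Y × W → ℝ := fun z => pXY (z.1, z.2.1) * pW z.2.2 with hA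
  set B : X × W → ℝ := fun z => pX z.1 * pW z.2 with hB
  -- Step 1: ent A = ent pXY + ent pW, ent B = ent pX + ent pW
  have entA : ent A = ent pXY + ent pW := by
    rw [← ent_prod pXY pW sXY sW,
      ← ent_reindex (Equiv.prodAssoc X Y W).symm (fun z : (X × Y) × W => pXY z.1 * pW z.2)]
    exact ent_congr fun z => rfl
  have entB : ent B = ent pX + ent pW := ent_prod pX pW sX sW
  -- Step 2: ent A ≤ ent p
  have step2 : ent A ≤ ent p := by
    have h := ent_marginal_le (fun z : (X × Y × W) × U => p (eAssoc4 z)) (fun z => hpos _)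
    rw [ent_reindex eAssoc4 p] at h
    refine le_trans (le_of_eq ?_) h
    refine ent_congr fun z => ?_
    exact (hindep z.1 z.2.1 z.2.2).symm
  -- Step 3: ent pXWU ≤ ent B + ent pU
  have step3 : ent pXWU ≤ ent B + ent pU := by
    have hg0 : ∀ z : (X × W) × U, 0 ≤ pXWU (eAssoc3 z) := by
      intro z
      show 0 ≤ pXWU (z.1.1, z.1.2, z.2)
      rw [hpXWU]
      exact Finset.sum_nonneg fun y _ => hpos _
    have hg1 : ∑ z : (X × W) × U, pXWU (eAssoc3 z) = 1 := by
      rw [show (∑ z : (X × W) × U, pXWU (eAssoc3 z)) = ∑ z : X × W × U, pXWU z from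
        Fintype.sum_equiv eAssoc3 _ _ (fun z => rfl)]
      rw [Fintype.sum_prod_type, ← hsum']
      refine Finset.sum_congr rfl fun x _ => ?_
      rw [Fintype.sum_prod_type]
      calc ∑ w, ∑ u, pXWU (x, w, u) = ∑ w, ∑ u, ∑ y, p (x, y, w, u) :=
            Finset.sum_congr rfl fun w _ => Finset.sum_congr rfl fun u _ => hpXWU x w u
        _ = ∑ w, ∑ y, ∑ u, p (x, y, w, u) :=
            Finset.sum_congr rfl fun w _ => Finset.sum_comm
        _ = ∑ y, ∑ w, ∑ u, p (x, y, w, u) := Finset.sum_comm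
    have h := ent_subadd (fun z : (X × W) × U => pXWU (eAssoc3 z)) hg0 hg1
    rw [ent_reindex eAssoc3 pXWU] at h
    refine h.trans (le_of_eq ?_)
    congr 1
    · refine ent_congr fun a => ?_
      show ∑ u, pXWU (a.1, a.2, u) = pX a.1 * pW a.2
      calc ∑ u, pXWU (a.1, a.2, u) = ∑ u, ∑ y, p (a.1, y, a.2, u) :=
            Finset.sum_congr rfl fun u _ => hpXWU _ _ _
        _ = ∑ y, ∑ u, p (a.1, y, a.2, u) := Finset.sum_comm
        _ = ∑ y, pXY (a.1, y) * pW a.2 :=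
            Finset.sum_congr rfl fun y _ => hindep _ _ _
        _ = (∑ y, pXY (a.1, y)) * pW a.2 := by rw [Finset.sum_mul]
        _ = pX a.1 * pW a.2 := by rw [← hpXrel]
    · refine ent_congr fun u => ?_
      show ∑ a : X × W, pXWU (a.1, a.2, u) = pU u
      rw [hpU, Fintype.sum_prod_type]
      refine Finset.sum_congr rfl fun x _ => ?_
      calc ∑ w, pXWU (x, w, u) = ∑ w, ∑ y, p (x, y, w, u) :=
            Finset.sum_congr rfl fun w _ => hpXWU _ _ _
        _ = ∑ y, ∑ w, p (x, y, w, u) := Finset.sum_comm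
  linarith
end

section
/- Suppose X is a deterministic function of Y, W is independent of Y, and the map c = C(Y,W) satisfies the lossless property that for each codeword value c and each key value w there is at most one x ∈ 𝒳 with P(C = c, X = x | W = w) > 0. Then for every c in the support of C, P_C(c) ≤ max_x P_X(x); consequently H(C) ≥ log(1 / max_x P_X(x)). -/
/-- If `X = f(Y)`, the key `W` is uniform and independent of `Y`, `C = g(Y,W)`, and the code is
lossless (for each `c` and `w` at most one `x` has `P(C=c, X=x | W=w) > 0`), then every codeword
probability satisfies `P_C(c) ≤ max_x P_X(x)`, and hence `H(C) ≥ log(1/max_x P_X(x))`. -/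
theorem stmt8 {Y Xc Cc Wc : Type*} [Fintype Y] [Fintype Xc] [Fintype Cc] [Fintype Wc]
    [DecidableEq Xc] [DecidableEq Cc] [Nonempty Xc] [Nonempty Wc]
    (q : Y → ℝ) (hq : ∀ y, 0 ≤ q y) (hq1 : ∑ y, q y = 1)
    (f : Y → Xc)  -- X = f(Y)
    (g : Y → Wc → Cc)  -- C = g(Y,W), with W uniform on Wc independent of Y
    (pX : Xc → ℝ) (hpX : ∀ x, pX x = ∑ y ∈ Finset.univ.filter (fun y => f y = x), q y)
    (pC : Cc → ℝ)
    (hpC : ∀ c, pC c = ∑ w : Wc, (1 / (Fintype.card Wc : ℝ)) *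
        ∑ y ∈ Finset.univ.filter (fun y => g y w = c), q y)
    -- lossless: for each codeword c and key w, at most one x with P(C=c, X=x | W=w) > 0
    (hlossless : ∀ c w x x',
      0 < ∑ y ∈ Finset.univ.filter (fun y => g y w = c ∧ f y = x), q y →
      0 < ∑ y ∈ Finset.univ.filter (fun y => g y w = c ∧ f y = x'), q y → x = x') :
    (∀ c, 0 < pC c → pC c ≤ Finset.univ.sup' Finset.univ_nonempty pX) ∧
    ent pC ≥ Real.logb 2 (1 / Finset.univ.sup' Finset.univ_nonempty pX) := by
  classical
  set M := Finset.univ.sup' Finset.univ_nonempty pX with hM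
  have hn : (0 : ℝ) < (Fintype.card Wc : ℝ) := by
    exact_mod_cast Fintype.card_pos
  have hpXnn : ∀ x, 0 ≤ pX x := fun x => by
    rw [hpX]; exact Finset.sum_nonneg fun y _ => hq y
  have hsumX : ∑ x, pX x = 1 := by
    simp_rw [hpX]
    rw [Finset.sum_fiberwise_of_maps_to (fun y _ => Finset.mem_univ (f y)) q, hq1]
  have hMpos : 0 < M := by
    by_contra h
    push_neg at h
    have hz : ∀ x, pX x = 0 := fun x =>
      le_antisymm (le_trans (Finset.le_sup' pX (Finset.mem_univ x)) h) (hpXnn x)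
    rw [Finset.sum_congr rfl (fun x _ => hz x)] at hsumX
    simp at hsumX
  -- key bound per (c, w)
  have key : ∀ c w, ∑ y ∈ Finset.univ.filter (fun y => g y w = c), q y ≤ M := by
    intro c w
    have hsplit : ∑ y ∈ Finset.univ.filter (fun y => g y w = c), q y
        = ∑ x, ∑ y ∈ Finset.univ.filter (fun y => g y w = c ∧ f y = x), q y := by
      rw [← Finset.sum_fiberwise_of_maps_to
        (g := f) (t := (Finset.univ : Finset Xc))
        (fun y _ => Finset.mem_univ (f y)) q]
      refine Finset.sum_congr rfl fun x _ => ?_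
      rw [Finset.filter_filter]
    set S : Xc → ℝ := fun x => ∑ y ∈ Finset.univ.filter (fun y => g y w = c ∧ f y = x), q y
      with hS
    have hSnn : ∀ x, 0 ≤ S x := fun x => Finset.sum_nonneg fun y _ => hq y
    by_cases hpos : ∃ x, 0 < S x
    · obtain ⟨x0, hx0⟩ := hpos
      have hzero : ∀ x ∈ Finset.univ, x ≠ x0 → S x = 0 := by
        intro x _ hx
        by_contra hne
        exact hx (hlossless c w x x0 (lt_of_le_of_ne (hSnn x) (Ne.symm hne)) hx0)
      rw [hsplit, Finset.sum_eq_single_of_mem x0 (Finset.mem_univ x0) hzero]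
      have hsub : S x0 ≤ pX x0 := by
        rw [hpX]
        refine Finset.sum_le_sum_of_subset_of_nonneg ?_ (fun y _ _ => hq y)
        intro y hy
        simp only [Finset.mem_filter, Finset.mem_univ, true_and] at hy ⊢
        exact hy.2
      exact hsub.trans (Finset.le_sup' pX (Finset.mem_univ x0))
    · push_neg at hpos
      have : ∀ x, S x = 0 := fun x => le_antisymm (hpos x) (hSnn x)
      rw [hsplit, Finset.sum_congr rfl (fun x _ => this x)]
      simp [hMpos.le]
  have part1 : ∀ c, pC c ≤ M := by
    intro c
    rw [hpC]
    calc ∑ w : Wc, (1 / (Fintype.card Wc : ℝ)) *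
          ∑ y ∈ Finset.univ.filter (fun y => g y w = c), q y
        ≤ ∑ _w : Wc, (1 / (Fintype.card Wc : ℝ)) * M := by
          refine Finset.sum_le_sum fun w _ => ?_
          exact mul_le_mul_of_nonneg_left (key c w) (by positivity)
      _ = M := by
          rw [Finset.sum_const, Finset.card_univ, nsmul_eq_mul]
          field_simp
  have hpCnn : ∀ c, 0 ≤ pC c := fun c => by
    rw [hpC]
    exact Finset.sum_nonneg fun w _ => mul_nonneg (by positivity)
      (Finset.sum_nonneg fun y _ => hq y)
  have hsumC : ∑ c, pC c = 1 := by
    simp_rw [hpC]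
    rw [Finset.sum_comm]
    have : ∀ w : Wc, ∑ c, (1 / (Fintype.card Wc : ℝ)) *
        ∑ y ∈ Finset.univ.filter (fun y => g y w = c), q y
        = (1 / (Fintype.card Wc : ℝ)) := by
      intro w
      rw [← Finset.mul_sum,
        Finset.sum_fiberwise_of_maps_to (fun y _ => Finset.mem_univ (g y w)) q, hq1, mul_one]
    rw [Finset.sum_congr rfl (fun w _ => this w), Finset.sum_const, Finset.card_univ,
      nsmul_eq_mul]
    field_simp
  refine ⟨fun c _ => part1 c, ?_⟩
  have hterm : ∀ c, pC c * Real.logb 2 (pC c) ≤ pC c * Real.logb 2 M := by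
    intro c
    rcases eq_or_lt_of_le (hpCnn c) with h | h
    · simp [← h]
    · exact mul_le_mul_of_nonneg_left
        (Real.logb_le_logb_of_le (by norm_num) h (part1 c)) (hpCnn c)
  have : ent pC ≥ - Real.logb 2 M := by
    unfold ent
    have hsum : ∑ c, pC c * Real.logb 2 (pC c) ≤ ∑ c, pC c * Real.logb 2 M :=
      Finset.sum_le_sum fun c _ => hterm c
    rw [← Finset.sum_mul, hsumC, one_mul] at hsum
    linarith
  rwa [one_div, Real.logb_inv]
end

section
/- Let 0 ≤ ε ≤ H(X) and α = ε/H(X). For any pair (X,Y) with |𝒳| finite and |𝒴| finite or countably infinite, there exists a random variable U with I(U;X) = ε, H(Y|U,X) = 0, and H(U) ≤ Σ_{x∈𝒳} H(Y|X=x) + ε + h(α), where h is the binary entropy function. -/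
noncomputable def LL (t : ℝ) : ℝ := t * Real.logb 2 t

lemma LL_zero : LL 0 = 0 := by simp [LL]
lemma LL_one : LL 1 = 0 := by simp [LL]

lemma ent_eq {α : Type*} [Fintype α] (q : α → ℝ) : ent q = - ∑ a, LL (q a) := rfl

lemma LL_mul {a b : ℝ} (ha : 0 ≤ a) (hb : 0 ≤ b) :
    LL (a * b) = a * LL b + b * LL a := by
  rcases ha.eq_or_lt with h | h
  · simp [LL, ← h]
  rcases hb.eq_or_lt with h' | h'
  · simp [LL, ← h']
  unfold LL
  rw [Real.logb_mul h.ne' h'.ne']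
  ring

lemma LL_ind (A : ℝ) (P : Prop) [Decidable P] :
    LL ((if P then (1:ℝ) else 0) * A) = (if P then (1:ℝ) else 0) * LL A := by
  split <;> simp [LL_zero]

lemma sum_pi_prod_mul {X Y : Type*} [Fintype X] [Fintype Y] [DecidableEq X]
    (c : X → Y → ℝ) (hc1 : ∀ x, ∑ y, c x y = 1) (x0 : X) (g : Y → ℝ) :
    ∑ f : X → Y, (∏ x, c x (f x)) * g (f x0) = ∑ y, c x0 y * g y := by
  classical
  set c' : X → Y → ℝ := fun x y => if x = x0 then c x y * g y else c x y with hc'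
  have h1 : ∀ f : X → Y, (∏ x, c x (f x)) * g (f x0) = ∏ x, c' x (f x) := by
    intro f
    rw [← Finset.mul_prod_erase Finset.univ (fun x => c' x (f x)) (Finset.mem_univ x0),
        ← Finset.mul_prod_erase Finset.univ (fun x => c x (f x)) (Finset.mem_univ x0)]
    have h2 : ∏ x ∈ Finset.univ.erase x0, c' x (f x)
        = ∏ x ∈ Finset.univ.erase x0, c x (f x) :=
      Finset.prod_congr rfl (by intro x hx; simp [hc', (Finset.mem_erase.mp hx).1])
    rw [h2]
    simp only [hc', if_pos rfl]
    ring
  simp_rw [h1]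
  rw [← Fintype.prod_sum c']
  rw [← Finset.mul_prod_erase Finset.univ (fun x => ∑ y, c' x y) (Finset.mem_univ x0)]
  have h3 : ∏ x ∈ Finset.univ.erase x0, (∑ y, c' x y) = 1 := by
    apply Finset.prod_eq_one
    intro x hx
    have hxne := (Finset.mem_erase.mp hx).1
    simp only [hc', if_neg hxne]
    exact hc1 x
  rw [h3]
  simp only [hc', if_pos rfl, mul_one]

lemma sum_pi_prod {X Y : Type*} [Fintype X] [Fintype Y] [DecidableEq X]
    (c : X → Y → ℝ) (hc1 : ∀ x, ∑ y, c x y = 1) :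
    ∑ f : X → Y, (∏ x, c x (f x)) = 1 := by
  rw [← Fintype.prod_sum c]
  exact Finset.prod_eq_one (fun x _ => hc1 x)

lemma LL_prod {X Y : Type*} [Fintype X] [Fintype Y]
    (c : X → Y → ℝ) (f : X → Y) :
    LL (∏ x, c x (f x)) = ∑ x, (∏ x', c x' (f x')) * Real.logb 2 (c x (f x)) := by
  by_cases hz : ∃ x, c x (f x) = 0
  · obtain ⟨x1, hx1⟩ := hz
    have hp : ∏ x, c x (f x) = 0 :=
      Finset.prod_eq_zero (Finset.mem_univ x1) hx1
    simp [hp, LL_zero]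
  · push_neg at hz
    unfold LL
    rw [Real.logb_prod _ _ (fun x _ => hz x), Finset.mul_sum]

lemma ent_pi {X Y : Type*} [Fintype X] [Fintype Y] [DecidableEq X]
    (c : X → Y → ℝ) (hc1 : ∀ x, ∑ y, c x y = 1) :
    ent (fun f : X → Y => ∏ x, c x (f x)) = ∑ x, ent (c x) := by
  rw [ent_eq]
  simp_rw [LL_prod c]
  rw [Finset.sum_comm]
  have h2 : ∀ x : X, ∑ f : X → Y, (∏ x', c x' (f x')) * Real.logb 2 (c x (f x))
      = ∑ y, c x y * Real.logb 2 (c x y) :=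
    fun x => sum_pi_prod_mul c hc1 x (fun y => Real.logb 2 (c x y))
  simp_rw [h2]
  rw [← Finset.sum_neg_distrib]
  rfl

lemma sum3_factor {A' B' C' : Type*} [Fintype A'] [Fintype B'] [Fintype C']
    (A : A' → ℝ) (B : B' → ℝ) (C : C' → ℝ) :
    ∑ x : C', ∑ b : A', ∑ f : B', A b * B f * C x
      = (∑ b, A b) * (∑ f, B f) * (∑ x, C x) := by
  simp_rw [← Finset.sum_mul, ← Finset.mul_sum]
  rw [← Finset.sum_mul]

lemma sum2_expand {I J : Type*} [Fintype I] [Fintype J] (a : I → ℝ) (b : J → ℝ)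
    (ha0 : ∀ i, 0 ≤ a i) (hb0 : ∀ j, 0 ≤ b j)
    (ha1 : ∑ i, a i = 1) (hb1 : ∑ j, b j = 1) :
    ∑ i, ∑ j, LL (a i * b j) = (∑ i, LL (a i)) + (∑ j, LL (b j)) := by
  have h : ∀ i : I, ∑ j, LL (a i * b j) = a i * (∑ j, LL (b j)) + LL (a i) := by
    intro i
    simp_rw [LL_mul (ha0 i) (hb0 _)]
    rw [Finset.sum_add_distrib, ← Finset.mul_sum, ← Finset.sum_mul, hb1, one_mul]
  simp_rw [h]
  rw [Finset.sum_add_distrib, ← Finset.sum_mul, ha1, one_mul, add_comm]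

/-- Extended Functional Representation Lemma with entropy bound: for `0 ≤ ε ≤ H(X)` and
`α = ε/H(X)` there exists `U` with `I(U;X) = ε`, `H(Y|U,X) = 0` and
`H(U) ≤ Σ_x H(Y|X=x) + ε + h(α)`, where `h` is the binary entropy. -/
theorem stmt9 {X Y : Type*} [Fintype X] [Fintype Y]
    (p : X × Y → ℝ) (hpos : ∀ z, 0 ≤ p z) (hsum : ∑ z, p z = 1)
    (pX : X → ℝ) (hpX : ∀ x, pX x = ∑ y, p (x, y))
    (ε α : ℝ) (hε0 : 0 ≤ ε) (hεH : ε ≤ ent pX) (hHX : 0 < ent pX)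
    (hα : α = ε / ent pX) :
    ∃ (n : ℕ) (q : X × Y × Fin n → ℝ),
      (∀ z, 0 ≤ q z) ∧ (∑ z, q z = 1) ∧
      -- consistency with P_{XY}
      (∀ x y, (∑ u, q (x, y, u)) = p (x, y)) ∧
      -- I(U;X) = ε
      (ent (fun u => ∑ x, ∑ y, q (x, y, u))
        + ent pX
        - ent (fun xu : X × Fin n => ∑ y, q (xu.1, y, xu.2)) = ε) ∧
      -- H(Y|U,X) = 0
      (ent q - ent (fun xu : X × Fin n => ∑ y, q (xu.1, y, xu.2)) = 0) ∧
      -- H(U) ≤ Σ_x H(Y|X=x) + ε + h(α)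
      (ent (fun u => ∑ x, ∑ y, q (x, y, u))
        ≤ (∑ x, ent (fun y => p (x, y) / pX x)) + ε
          + (-(α * Real.logb 2 α) - (1 - α) * Real.logb 2 (1 - α))) := by
  classical
  -- basic facts about pX and α
  have hpXnn : ∀ x, 0 ≤ pX x := fun x => by
    rw [hpX]; exact Finset.sum_nonneg fun y _ => hpos (x, y)
  have hpXsum : ∑ x, pX x = 1 := by
    simp_rw [hpX]; rw [← Fintype.sum_prod_type]; exact hsum
  have hα0 : 0 ≤ α := by rw [hα]; positivity
  have hα1 : α ≤ 1 := by rw [hα]; exact (div_le_one hHX).mpr hεH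
  have hαH : α * ent pX = ε := by rw [hα]; field_simp
  -- Y is nonempty
  obtain ⟨z0, -, hz0⟩ := Finset.exists_ne_zero_of_sum_ne_zero (by rw [hsum]; norm_num :
    ∑ z ∈ Finset.univ, p z ≠ 0)
  set y0 : Y := z0.2 with hy0
  -- the conditional distribution c x y = P(Y = y | X = x)
  set c : X → Y → ℝ := fun x y =>
    if pX x = 0 then (if y = y0 then 1 else 0) else p (x, y) / pX x with hc
  have hc0 : ∀ x y, 0 ≤ c x y := by
    intro x y
    simp only [hc]
    split
    · split <;> norm_num
    · next h => exact div_nonneg (hpos _) (hpXnn x)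
  have hc1 : ∀ x, ∑ y, c x y = 1 := by
    intro x
    simp only [hc]
    split
    · simp
    · next h =>
      rw [← Finset.sum_div, ← hpX, div_self h]
  have hpc : ∀ x y, pX x * c x y = p (x, y) := by
    intro x y
    simp only [hc]
    split
    · next h =>
      have hs0 : ∑ y, p (x, y) = 0 := by rw [← hpX]; exact h
      have h0 : p (x, y) = 0 :=
        (Finset.sum_eq_zero_iff_of_nonneg (fun y _ => hpos (x, y))).mp hs0 y
          (Finset.mem_univ y)
      simp [h, h0]
    · next h => field_simp
  -- the product distribution on functions
  set Pr : (X → Y) → ℝ := fun f => ∏ x, c x (f x) with hPrdef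
  have hPr0 : ∀ f, 0 ≤ Pr f := fun f => Finset.prod_nonneg fun x _ => hc0 x (f x)
  have hPr1 : ∑ f, Pr f = 1 := sum_pi_prod c hc1
  -- the Bernoulli(α) distribution
  set β : Bool → ℝ := fun b => if b then α else 1 - α with hβdef
  have hβ0 : ∀ b, 0 ≤ β b := by intro b; cases b <;> simp [hβdef] <;> linarith
  have hβ1 : ∑ b, β b = 1 := by simp [hβdef]
  -- the joint distribution
  set μ : X → Y → Bool × (X → Y) × Option X → ℝ := fun x y t =>
    (if t.2.1 x = y then (1:ℝ) else 0) *
      ((if t.2.2 = (if t.1 then some x else none) then (1:ℝ) else 0) *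
        (β t.1 * Pr t.2.1 * pX x)) with hμdef
  have hμ0 : ∀ x y t, 0 ≤ μ x y t := by
    intro x y t
    have := hβ0 t.1
    have := hPr0 t.2.1
    have := hpXnn x
    simp only [hμdef]
    positivity
  -- marginal over y
  have hsumy : ∀ x t, ∑ y, μ x y t
      = (if t.2.2 = (if t.1 then some x else none) then (1:ℝ) else 0)
        * (β t.1 * Pr t.2.1 * pX x) := by
    intro x t
    simp only [hμdef]
    rw [← Finset.sum_mul]
    simp
  -- marginal over y and all of t : full consistency
  have hsumT : ∀ x y, ∑ t : Bool × (X → Y) × Option X, μ x y t = p (x, y) := by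
    intro x y
    rw [Fintype.sum_prod_type]
    have h1 : ∀ b : Bool, ∑ t2 : (X → Y) × Option X, μ x y (b, t2)
        = β b * c x y * pX x := by
      intro b
      rw [Fintype.sum_prod_type]
      have h2 : ∀ f : X → Y, ∑ o : Option X, μ x y (b, f, o)
          = (if f x = y then (1:ℝ) else 0) * (β b * Pr f * pX x) := by
        intro f
        simp only [hμdef]
        have h2a : ∀ o : Option X, (if f x = y then (1:ℝ) else 0) *
            ((if o = (if b = true then some x else none) then (1:ℝ) else 0)
              * (β b * Pr f * pX x))
            = if o = (if b = true then some x else none) then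
                (if f x = y then (1:ℝ) else 0) * (β b * Pr f * pX x) else 0 := by
          intro o; by_cases ho : o = (if b = true then some x else none) <;> simp [ho]
        simp_rw [h2a]
        simp
      simp_rw [h2]
      have h3 : ∑ f : X → Y, (if f x = y then (1:ℝ) else 0) * (β b * Pr f * pX x)
          = ∑ f : X → Y, Pr f * ((if f x = y then (1:ℝ) else 0) * (β b * pX x)) := by
        apply Finset.sum_congr rfl; intro f _; ring
      rw [h3, sum_pi_prod_mul c hc1 x (fun yy => (if yy = y then (1:ℝ) else 0) * (β b * pX x))]
      have h4 : ∀ yy, c x yy * ((if yy = y then (1:ℝ) else 0) * (β b * pX x))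
          = if yy = y then c x yy * (β b * pX x) else 0 := by
        intro yy; split <;> ring
      simp_rw [h4]
      rw [Finset.sum_ite_eq' Finset.univ y (fun yy => c x yy * (β b * pX x))]
      simp only [Finset.mem_univ, if_pos]
      ring
    simp_rw [h1]
    rw [← Finset.sum_mul, ← Finset.sum_mul, hβ1, one_mul, mul_comm, hpc]
  -- abbreviations for the three `∑ LL` quantities
  set SpX : ℝ := ∑ x, LL (pX x) with hSpX
  set SPr : ℝ := ∑ f, LL (Pr f) with hSPr
  set SB : ℝ := ∑ b, LL (β b) with hSB
  have hHSpX : SpX = - ent pX := by rw [ent_eq]; ring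
  have hεα : α * SpX = -ε := by rw [hHSpX, ← hαH]; ring
  -- joint nonnegativity of Pr f * pX x and its sum
  have hPrpX1 : ∑ f : X → Y, ∑ x, Pr f * pX x = 1 := by
    simp_rw [← Finset.mul_sum, hpXsum, mul_one]; exact hPr1
  -- the (X,U) marginal entropy sum
  have hentXU : ∑ x, ∑ t : Bool × (X → Y) × Option X, LL (∑ y, μ x y t)
      = SpX + SPr + SB := by
    simp_rw [hsumy]
    have h1 : ∀ x : X, ∑ t : Bool × (X → Y) × Option X,
        LL ((if t.2.2 = (if t.1 = true then some x else none) then (1:ℝ) else 0)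
          * (β t.1 * Pr t.2.1 * pX x))
        = ∑ b : Bool, ∑ f : X → Y, LL (β b * Pr f * pX x) := by
      intro x
      rw [Fintype.sum_prod_type]
      apply Finset.sum_congr rfl; intro b _
      rw [Fintype.sum_prod_type]
      apply Finset.sum_congr rfl; intro f _
      have h2 : ∀ o : Option X,
          LL ((if o = (if b = true then some x else none) then (1:ℝ) else 0)
            * (β b * Pr f * pX x))
          = if o = (if b = true then some x else none) then LL (β b * Pr f * pX x) else 0 := by
        intro o; by_cases ho : o = (if b = true then some x else none) <;> simp [ho, LL_zero]
      simp_rw [h2]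
      simp
    simp_rw [h1]
    -- now ∑ x ∑ b ∑ f LL (β b * Pr f * pX x)
    have h3 : ∀ x b, ∑ f : X → Y, LL (β b * Pr f * pX x)
        = ∑ f : X → Y, LL (β b * (Pr f * pX x)) := by
      intro x b; apply Finset.sum_congr rfl; intro f _; rw [mul_assoc]
    simp_rw [h3]
    have h4 : ∀ x b, ∑ f : X → Y, LL (β b * (Pr f * pX x))
        = ∑ f : X → Y, (β b * LL (Pr f * pX x) + (Pr f * pX x) * LL (β b)) := by
      intro x b; apply Finset.sum_congr rfl; intro f _
      exact LL_mul (hβ0 b) (mul_nonneg (hPr0 f) (hpXnn x))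
    simp_rw [h4]
    rw [Finset.sum_comm]  -- ∑ b ∑ x ∑ f
    have h5 : ∀ b : Bool, ∑ x, ∑ f : X → Y,
        (β b * LL (Pr f * pX x) + (Pr f * pX x) * LL (β b))
        = β b * (∑ x, ∑ f : X → Y, LL (Pr f * pX x)) + LL (β b) := by
      intro b
      simp_rw [Finset.sum_add_distrib, ← Finset.mul_sum, ← Finset.sum_mul]
      rw [hPr1]
      simp only [one_mul]
      rw [hpXsum, one_mul]
    simp_rw [h5]
    have h6 : ∑ x, ∑ f : X → Y, LL (Pr f * pX x) = SPr + SpX := by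
      rw [Finset.sum_comm]
      exact sum2_expand Pr pX hPr0 hpXnn hPr1 hpXsum
    rw [Finset.sum_add_distrib, ← Finset.sum_mul, hβ1, one_mul, h6]
    rw [hSB]
    ring
  -- the U marginal : sum over x of the (X,U) marginal
  have hsumxy : ∀ t : Bool × (X → Y) × Option X, ∑ x, ∑ y, μ x y t
      = ∑ x, (if t.2.2 = (if t.1 = true then some x else none) then (1:ℝ) else 0)
        * (β t.1 * Pr t.2.1 * pX x) := by
    intro t; apply Finset.sum_congr rfl; intro x _; exact hsumy x t
  -- U marginal entropy sum
  have hentU : ∑ t : Bool × (X → Y) × Option X, LL (∑ x, ∑ y, μ x y t)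
      = α * SpX + SPr + SB := by
    simp_rw [hsumxy]
    rw [Fintype.sum_prod_type]
    rw [Fintype.sum_bool]
    -- b = true part
    have htrue : ∑ t2 : (X → Y) × Option X,
        LL (∑ x, (if t2.2 = (if (true : Bool) = true then some x else none) then (1:ℝ) else 0)
          * (β true * Pr t2.1 * pX x))
        = α * (SPr + SpX) + LL α := by
      have hβt : β true = α := by simp [hβdef]
      simp only [reduceIte, hβt]
      rw [Fintype.sum_prod_type]
      have h1 : ∀ f : X → Y, ∑ o : Option X,
          LL (∑ x, (if o = some x then (1:ℝ) else 0) * (α * Pr f * pX x))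
          = ∑ x, LL (α * (Pr f * pX x)) := by
        intro f
        rw [Fintype.sum_option]
        have hnone : (∑ x, (if (none : Option X) = some x then (1:ℝ) else 0)
            * (α * Pr f * pX x)) = 0 := by simp
        rw [hnone, LL_zero, zero_add]
        apply Finset.sum_congr rfl; intro x1 _
        have hsome : (∑ x, (if (some x1 : Option X) = some x then (1:ℝ) else 0)
            * (α * Pr f * pX x)) = α * (Pr f * pX x1) := by
          have hi : ∀ x, (if (some x1 : Option X) = some x then (1:ℝ) else 0)
              * (α * Pr f * pX x) = if x = x1 then α * (Pr f * pX x) else 0 := by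
            intro x
            by_cases hx : x = x1
            · subst hx; simp [mul_assoc]
            · have hx' : ¬ (x1 = x) := fun h => hx h.symm
              simp [hx, hx']
          simp_rw [hi]
          simp
        rw [hsome]
      simp_rw [h1]
      have h2 : ∀ f : X → Y, ∀ x : X, LL (α * (Pr f * pX x))
          = α * LL (Pr f * pX x) + (Pr f * pX x) * LL α :=
        fun f x => LL_mul hα0 (mul_nonneg (hPr0 f) (hpXnn x))
      simp_rw [h2, Finset.sum_add_distrib, ← Finset.mul_sum, ← Finset.sum_mul]
      rw [sum2_expand Pr pX hPr0 hpXnn hPr1 hpXsum, hPrpX1, one_mul]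
    -- b = false part
    have hfalse : ∑ t2 : (X → Y) × Option X,
        LL (∑ x, (if t2.2 = (if (false : Bool) = true then some x else none) then (1:ℝ) else 0)
          * (β false * Pr t2.1 * pX x))
        = (1 - α) * SPr + LL (1 - α) := by
      have hβf : β false = 1 - α := by simp [hβdef]
      simp only [hβf]
      have hnone : ∀ x : X, (if (false : Bool) = true then some x else none) = (none : Option X) := fun _ => rfl
      simp only [hnone]
      rw [Fintype.sum_prod_type]
      have h1 : ∀ f : X → Y, ∑ o : Option X,
          LL (∑ x, (if o = none then (1:ℝ) else 0) * ((1 - α) * Pr f * pX x))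
          = LL ((1 - α) * Pr f) := by
        intro f
        have hterm : ∀ o : Option X,
            LL (∑ x, (if o = none then (1:ℝ) else 0) * ((1 - α) * Pr f * pX x))
            = if o = none then LL ((1 - α) * Pr f) else 0 := by
          intro o
          by_cases ho : o = none <;> simp [ho, LL_zero, ← Finset.mul_sum, hpXsum]
        simp_rw [hterm]
        simp
      simp_rw [h1]
      have h2 : ∀ f : X → Y, LL ((1 - α) * Pr f)
          = (1 - α) * LL (Pr f) + Pr f * LL (1 - α) :=
        fun f => LL_mul (by linarith) (hPr0 f)
      simp_rw [h2]
      rw [Finset.sum_add_distrib, ← Finset.mul_sum, ← Finset.sum_mul, hPr1, one_mul]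
    rw [htrue, hfalse]
    have hSBval : SB = LL α + LL (1 - α) := by
      rw [hSB, Fintype.sum_bool]
      simp [hβdef]
    rw [hSBval]
    ring
  
  -- pointwise: summing LL over y equals LL of the y-sum (Y is a function of (X,U))
  have hptwise : ∀ (x : X) (t : Bool × (X → Y) × Option X),
      ∑ y, LL (μ x y t) = LL (∑ y, μ x y t) := by
    intro x t
    rw [hsumy]
    have h1 : ∀ y, LL (μ x y t)
        = (if t.2.1 x = y then (1:ℝ) else 0) *
            LL ((if t.2.2 = (if t.1 = true then some x else none) then (1:ℝ) else 0)
              * (β t.1 * Pr t.2.1 * pX x)) := by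
      intro y
      simp only [hμdef]
      exact LL_ind _ _
    simp_rw [h1]
    rw [← Finset.sum_mul]
    have h2 : ∑ y, (if t.2.1 x = y then (1:ℝ) else 0) = 1 := by simp
    rw [h2, one_mul]
  -- entropy identities needed at the end
  have hSPrval : -SPr = ∑ x, ent (fun y => p (x, y) / pX x) := by
    have h1 : -SPr = ent (fun f : X → Y => ∏ x, c x (f x)) := by
      rw [ent_eq, hSPr]
    rw [h1, ent_pi c hc1]
    apply Finset.sum_congr rfl; intro x _
    by_cases hx : pX x = 0
    · have hcx : c x = fun y => if y = y0 then (1:ℝ) else 0 := by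
        funext y; simp [hc, hx]
      have hrx : (fun y => p (x, y) / pX x) = fun _ : Y => (0:ℝ) := by
        funext y; rw [hx, div_zero]
      rw [hcx, hrx]
      rw [ent_eq, ent_eq]
      congr 1
      apply Finset.sum_congr rfl; intro y _
      by_cases hy : y = y0 <;> simp [hy, LL_zero, LL_one]
    · have hcx : c x = fun y => p (x, y) / pX x := by
        funext y; simp [hc, hx]
      rw [hcx]
  have hSBval : SB = α * Real.logb 2 α + (1 - α) * Real.logb 2 (1 - α) := by
    rw [hSB, Fintype.sum_bool]
    simp [hβdef, LL]
  -- the witness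
  set n := Fintype.card (Bool × (X → Y) × Option X) with hn
  set e : (Bool × (X → Y) × Option X) ≃ Fin n := Fintype.equivFin _ with he
  refine ⟨n, fun z => μ z.1 z.2.1 (e.symm z.2.2), fun z => hμ0 _ _ _, ?_, ?_, ?_, ?_, ?_⟩
  · -- total mass 1
    show ∑ z : X × Y × Fin n, μ z.1 z.2.1 (e.symm z.2.2) = 1
    rw [Fintype.sum_prod_type]
    have h1 : ∀ x : X, ∑ yu : Y × Fin n, μ x yu.1 (e.symm yu.2) = pX x := by
      intro x
      rw [Fintype.sum_prod_type]
      have h2 : ∀ y : Y, ∑ u : Fin n, μ x y (e.symm u) = p (x, y) := by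
        intro y
        rw [Equiv.sum_comp e.symm (fun t => μ x y t)]
        exact hsumT x y
      simp_rw [h2]
      exact (hpX x).symm
    simp_rw [h1]
    exact hpXsum
  · -- consistency
    intro x y
    show ∑ u : Fin n, μ x y (e.symm u) = p (x, y)
    rw [Equiv.sum_comp e.symm (fun t => μ x y t)]
    exact hsumT x y
  · -- I(U;X) = ε
    show ent (fun u : Fin n => ∑ x, ∑ y, μ x y (e.symm u)) + ent pX
      - ent (fun xu : X × Fin n => ∑ y, μ xu.1 y (e.symm xu.2)) = ε
    have hU : ent (fun u : Fin n => ∑ x, ∑ y, μ x y (e.symm u))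
        = -(α * SpX + SPr + SB) := by
      rw [ent_eq]
      have := Equiv.sum_comp e.symm (fun t => LL (∑ x, ∑ y, μ x y t))
      simp only [this]
      rw [hentU]
    have hXU : ent (fun xu : X × Fin n => ∑ y, μ xu.1 y (e.symm xu.2))
        = -(SpX + SPr + SB) := by
      rw [ent_eq, Fintype.sum_prod_type]
      have h1 : ∀ x : X, ∑ u : Fin n, LL (∑ y, μ x y (e.symm u))
          = ∑ t : Bool × (X → Y) × Option X, LL (∑ y, μ x y t) :=
        fun x => Equiv.sum_comp e.symm (fun t => LL (∑ y, μ x y t))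
      simp_rw [h1]
      rw [hentXU]
    rw [hU, hXU]
    have hpXent : ent pX = -SpX := by rw [hHSpX]; ring
    rw [hpXent]
    linarith [hεα]
  · -- H(Y | U, X) = 0
    show ent (fun z : X × Y × Fin n => μ z.1 z.2.1 (e.symm z.2.2))
      - ent (fun xu : X × Fin n => ∑ y, μ xu.1 y (e.symm xu.2)) = 0
    rw [ent_eq, ent_eq]
    have h1 : ∑ z : X × Y × Fin n, LL (μ z.1 z.2.1 (e.symm z.2.2))
        = ∑ xu : X × Fin n, LL (∑ y, μ xu.1 y (e.symm xu.2)) := by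
      rw [Fintype.sum_prod_type, Fintype.sum_prod_type]
      apply Finset.sum_congr rfl; intro x _
      rw [Fintype.sum_prod_type]
      rw [Finset.sum_comm]
      apply Finset.sum_congr rfl; intro u _
      exact hptwise x (e.symm u)
    rw [h1]
    ring
  · -- entropy bound for U
    show ent (fun u : Fin n => ∑ x, ∑ y, μ x y (e.symm u))
      ≤ (∑ x, ent (fun y => p (x, y) / pX x)) + ε
        + (-(α * Real.logb 2 α) - (1 - α) * Real.logb 2 (1 - α))
    have hU : ent (fun u : Fin n => ∑ x, ∑ y, μ x y (e.symm u))
        = -(α * SpX + SPr + SB) := by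
      rw [ent_eq]
      have := Equiv.sum_comp e.symm (fun t => LL (∑ x, ∑ y, μ x y t))
      simp only [this]
      rw [hentU]
    rw [hU]
    have h2 : -(α * SpX + SPr + SB)
        = (∑ x, ent (fun y => p (x, y) / pX x)) + ε
          + (-(α * Real.logb 2 α) - (1 - α) * Real.logb 2 (1 - α)) := by
      rw [← hSPrval, hSBval]
      linarith [hεα]
    rw [h2]
end

section
/- For any 0 ≤ ε < I(X;Y) and pair (X,Y) on finite alphabets 𝒳 and 𝒴, there exists a random variable U on an alphabet 𝒰 with I(U;X) = ε, H(Y|U,X) = 0, and |𝒰| ≤ (|𝒳|(|𝒴|−1)+1)(|𝒳|+1). Moreover, if X is a deterministic function of Y, U can be chosen with |𝒰| ≤ (|𝒴|−|𝒳|+1)(|𝒳|+1). -/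
set_option maxHeartbeats 1000000

namespace Stmt10

noncomputable def phi (r : ℝ) : ℝ := r * Real.logb 2 r

lemma phi_zero : phi 0 = 0 := by simp [phi]

lemma ent_eq {α : Type*} [Fintype α] (q : α → ℝ) : ent q = - ∑ a, phi (q a) := rfl

lemma continuous_phi : Continuous phi := by
  have h : phi = fun r => (r * Real.log r) * (Real.log 2)⁻¹ := by
    funext r; simp only [phi, Real.logb]; ring
  rw [h]; exact Real.continuous_mul_log.mul continuous_const

lemma phi_mul (r s : ℝ) (hr : 0 ≤ r) (hs : 0 ≤ s) : phi (r * s) = s * phi r + r * phi s := by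
  rcases eq_or_lt_of_le hr with h | h
  · simp [← h, phi]
  rcases eq_or_lt_of_le hs with h' | h'
  · simp [← h', phi]
  simp only [phi]
  rw [Real.logb_mul h.ne' h'.ne']; ring

lemma ent_prod {α β : Type*} [Fintype α] [Fintype β] (a : α → ℝ) (b : β → ℝ)
    (ha : ∀ i, 0 ≤ a i) (hb : ∀ j, 0 ≤ b j) (ha1 : ∑ i, a i = 1) (hb1 : ∑ j, b j = 1) :
    ent (fun z : α × β => a z.1 * b z.2) = ent a + ent b := by
  simp only [ent_eq]
  rw [Fintype.sum_prod_type]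
  have h : ∀ i : α, ∑ j, phi (a i * b j) = phi (a i) + a i * ∑ j, phi (b j) := by
    intro i
    have : ∀ j, phi (a i * b j) = b j * phi (a i) + a i * phi (b j) :=
      fun j => phi_mul _ _ (ha i) (hb j)
    rw [Finset.sum_congr rfl (fun j _ => this j), Finset.sum_add_distrib,
      ← Finset.sum_mul, hb1, ← Finset.mul_sum, one_mul]
  rw [Finset.sum_congr rfl (fun i _ => h i), Finset.sum_add_distrib,
    ← Finset.sum_mul, ha1, one_mul]
  ring

lemma ent_comap {β γ : Type*} [Fintype β] [Fintype γ] [DecidableEq γ] (ι : β → γ)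
    (hι : Function.Injective ι) (f : β → ℝ) :
    ent (fun c => ∑ b, if ι b = c then f b else 0) = ent f := by
  simp only [ent_eq]
  congr 1
  have key : ∀ c, phi (∑ b, if ι b = c then f b else 0) = ∑ b, if ι b = c then phi (f b) else 0 := by
    intro c
    by_cases hc : ∃ b, ι b = c
    · obtain ⟨b0, rfl⟩ := hc
      classical
      have h1 : ∀ (g : β → ℝ), (∑ b, if ι b = ι b0 then g b else 0) = g b0 := by
        intro g
        have : ∀ b, (if ι b = ι b0 then g b else 0) = (if b = b0 then g b else 0) := by
          intro b; simp [hι.eq_iff]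
        rw [Finset.sum_congr rfl (fun b _ => this b),
          Finset.sum_ite_eq' Finset.univ b0 g, if_pos (Finset.mem_univ _)]
      rw [h1, h1]
    · push_neg at hc
      simp [hc, phi_zero]
  rw [Finset.sum_congr rfl (fun c _ => key c), Finset.sum_comm]
  exact Finset.sum_congr rfl (fun b _ => by rw [Finset.sum_ite_eq Finset.univ (ι b) (fun _ => phi (f b)), if_pos (Finset.mem_univ _)])

lemma ent_marg_le {X Y : Type*} [Fintype X] [Fintype Y] (p : X × Y → ℝ) (hp : ∀ z, 0 ≤ p z)
    (pY : Y → ℝ) (hpY : ∀ y, pY y = ∑ x, p (x, y)) : ent pY ≤ ent p := by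
  simp only [ent_eq, neg_le_neg_iff]
  have hple : ∀ x y, p (x, y) ≤ pY y := by
    intro x y
    rw [hpY]
    exact Finset.single_le_sum (fun i _ => hp (i, y)) (Finset.mem_univ x)
  calc ∑ z, phi (p z) = ∑ x, ∑ y, phi (p (x,y)) := by rw [Fintype.sum_prod_type]
    _ ≤ ∑ x, ∑ y, p (x,y) * Real.logb 2 (pY y) := by
        apply Finset.sum_le_sum; intro x _; apply Finset.sum_le_sum; intro y _
        rcases eq_or_lt_of_le (hp (x,y)) with h | h
        · rw [← h, phi_zero, zero_mul]
        · exact mul_le_mul_of_nonneg_left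
            ((Real.logb_le_logb (by norm_num) h (lt_of_lt_of_le h (hple x y))).mpr (hple x y)) (hp (x,y))
    _ = ∑ y, phi (pY y) := by
        rw [Finset.sum_comm]
        apply Finset.sum_congr rfl; intro y _
        rw [← Finset.sum_mul, ← hpY y]; rfl

lemma sum_eq_single_support {Y : Type*} [Fintype Y] (f : Y → ℝ) (y0 : Y)
    (h : ∀ y, f y ≠ 0 → y = y0) : ∑ y, f y = f y0 := by
  apply Finset.sum_eq_single y0
  · intro b _ hb
    by_contra hb0
    exact hb (h b hb0)
  · intro h'; exact absurd (Finset.mem_univ _) h'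

lemma ent_det {X Y U : Type*} [Fintype X] [Fintype Y] [Fintype U] (q : X × Y × U → ℝ)
    (G : X → U → Y) (h : ∀ x y u, q (x, y, u) ≠ 0 → y = G x u) :
    ent q = ent (fun xu : X × U => ∑ y, q (xu.1, y, xu.2)) := by
  simp only [ent_eq]
  congr 1
  rw [Fintype.sum_prod_type, Fintype.sum_prod_type]
  have h1 : ∀ x u, (∑ y, q (x, y, u)) = q (x, G x u, u) :=
    fun x u => sum_eq_single_support _ _ (fun y hy => h x y u hy)
  have h2 : ∀ x u, (∑ y, phi (q (x, y, u))) = phi (q (x, G x u, u)) := by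
    intro x u
    apply sum_eq_single_support (fun y => phi (q (x, y, u)))
    intro y hy
    apply h x y u
    intro h0; rw [h0] at hy; exact hy phi_zero
  calc ∑ x, ∑ yu : Y × U, phi (q (x, yu.1, yu.2))
      = ∑ x, ∑ u, ∑ y, phi (q (x, y, u)) := by
        apply Finset.sum_congr rfl; intro x _
        rw [Fintype.sum_prod_type, Finset.sum_comm]
    _ = ∑ x, ∑ u, phi (q (x, G x u, u)) := by
        apply Finset.sum_congr rfl; intro x _
        exact Finset.sum_congr rfl (fun u _ => h2 x u)
    _ = ∑ x, ∑ u, phi (∑ y, q (x, y, u)) := by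
        apply Finset.sum_congr rfl; intro x _
        exact Finset.sum_congr rfl (fun u _ => by rw [h1 x u])

lemma master {X Y : Type*} [Fintype X] [Fintype Y] [DecidableEq X] [DecidableEq Y]
    (p : X × Y → ℝ) (hpos : ∀ z, 0 ≤ p z) (hsum : ∑ z, p z = 1)
    (pX : X → ℝ) (hpX : ∀ x, pX x = ∑ y, p (x, y))
    (pY : Y → ℝ) (hpY : ∀ y, pY y = ∑ x, p (x, y))
    (ε : ℝ) (hε0 : 0 ≤ ε) (hεI : ε < ent pX + ent pY - ent p)
    (n K : ℕ) (μ : Fin K → ℝ) (hμ0 : ∀ c, 0 ≤ μ c) (hμ1 : ∑ c, μ c = 1)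
    (g : X → Fin K → Y)
    (hg : ∀ x y, pX x * (∑ c, if g x c = y then μ c else 0) = p (x, y))
    (cEmb : Fin K → Fin n) (yEmb : Y → Fin n) (hyEmb : Function.Injective yEmb)
    (G : X → Fin n → Y)
    (hG0 : ∀ x c, pX x ≠ 0 → G x (cEmb c) = g x c)
    (hG1 : ∀ x y, p (x, y) ≠ 0 → G x (yEmb y) = y) :
    ∃ q : X × Y × Fin n → ℝ,
      (∀ z, 0 ≤ q z) ∧ (∑ z, q z = 1) ∧
      (∀ x y, (∑ u, q (x, y, u)) = p (x, y)) ∧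
      (ent (fun u => ∑ x, ∑ y, q (x, y, u)) + ent pX
        - ent (fun xu : X × Fin n => ∑ y, q (xu.1, y, xu.2)) = ε) ∧
      (ent q - ent (fun xu : X × Fin n => ∑ y, q (xu.1, y, xu.2)) = 0) := by
  classical
  have hpX0 : ∀ x, 0 ≤ pX x := by
    intro x; rw [hpX]; exact Finset.sum_nonneg (fun y _ => hpos _)
  have hpXsum : ∑ x, pX x = 1 := by
    rw [Finset.sum_congr rfl (fun x _ => hpX x), ← Fintype.sum_prod_type]; exact hsum
  set q0 : X × Y × Fin n → ℝ :=
    fun z => pX z.1 * ∑ c, if cEmb c = z.2.2 ∧ g z.1 c = z.2.1 then μ c else 0 with hq0def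
  set q1 : X × Y × Fin n → ℝ :=
    fun z => if yEmb z.2.1 = z.2.2 then p (z.1, z.2.1) else 0 with hq1def
  set m0 : Fin n → ℝ := fun u => ∑ c, if cEmb c = u then μ c else 0 with hm0def
  set m1 : Fin n → ℝ := fun u => ∑ y, if yEmb y = u then pY y else 0 with hm1def
  -- basic facts about m0
  have hm00 : ∀ u, 0 ≤ m0 u := by
    intro u; apply Finset.sum_nonneg; intro c _
    split <;> [exact hμ0 c; exact le_refl 0]
  have hm01 : ∑ u, m0 u = 1 := by
    rw [hm0def]
    rw [Finset.sum_comm]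
    rw [Finset.sum_congr rfl (fun c _ => Finset.sum_ite_eq Finset.univ (cEmb c) (fun _ => μ c))]
    simpa using hμ1
  -- q0 marginals
  have hq0y : ∀ x u, (∑ y, q0 (x, y, u)) = pX x * m0 u := by
    intro x u
    simp only [hq0def, hm0def]
    rw [← Finset.mul_sum]
    congr 1
    rw [Finset.sum_comm]
    apply Finset.sum_congr rfl; intro c _
    by_cases h : cEmb c = u
    · simp [h]
    · simp [h]
  have hq0u : ∀ x y, (∑ u, q0 (x, y, u)) = p (x, y) := by
    intro x y
    simp only [hq0def]
    rw [← Finset.mul_sum, ← hg x y]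
    congr 1
    rw [Finset.sum_comm]
    apply Finset.sum_congr rfl; intro c _
    by_cases h : g x c = y
    · simp [h]
    · simp [h]
  have hq1u : ∀ x y, (∑ u, q1 (x, y, u)) = p (x, y) := by
    intro x y
    rw [hq1def]
    simpa using Finset.sum_ite_eq Finset.univ (yEmb y) (fun _ => p (x, y))
  have hq1y : ∀ x u, (∑ y, q1 (x, y, u)) = ∑ y, if yEmb y = u then p (x, y) else 0 := by
    intro x u; rfl
  have hq1xy : ∀ u, (∑ x, ∑ y, q1 (x, y, u)) = m1 u := by
    intro u
    rw [hm1def]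
    rw [Finset.sum_comm]
    apply Finset.sum_congr rfl; intro y _
    by_cases h : yEmb y = u
    · simp only [hq1def, h, if_true, hpY]
    · simp [hq1def, h]
  -- the path
  set F : ℝ → X × Y × Fin n → ℝ := fun θ z => (1 - θ) * q0 z + θ * q1 z with hFdef
  set uM : ℝ → Fin n → ℝ := fun θ u => (1 - θ) * m0 u + θ * m1 u with huMdef
  set xuM : ℝ → X × Fin n → ℝ := fun θ xu =>
    (1 - θ) * (pX xu.1 * m0 xu.2) + θ * (∑ y, if yEmb y = xu.2 then p (xu.1, y) else 0) with hxuMdef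
  set M : ℝ → ℝ := fun θ => ent (uM θ) + ent pX - ent (xuM θ) with hMdef
  have hsplit : ∀ θ x u, (∑ y, F θ (x, y, u)) = (1 - θ) * (∑ y, q0 (x,y,u)) + θ * (∑ y, q1 (x,y,u)) := by
    intro θ x u; rw [Finset.sum_add_distrib, Finset.mul_sum, Finset.mul_sum]
  have hMatch2 : ∀ θ x u, (∑ y, F θ (x, y, u)) = xuM θ (x, u) := by
    intro θ x u
    rw [hsplit θ x u, hq0y x u, hq1y x u]
  have hMatch1 : ∀ θ u, (∑ x, ∑ y, F θ (x, y, u)) = uM θ u := by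
    intro θ u
    calc ∑ x, ∑ y, F θ (x, y, u)
        = ∑ x, ((1 - θ) * (pX x * m0 u) + θ * (∑ y, q1 (x,y,u))) := by
          apply Finset.sum_congr rfl; intro x _; rw [hsplit θ x u, hq0y x u]
      _ = (1 - θ) * ((∑ x, pX x) * m0 u) + θ * (∑ x, ∑ y, q1 (x,y,u)) := by
          rw [Finset.sum_add_distrib, ← Finset.mul_sum, ← Finset.mul_sum, Finset.sum_mul]
      _ = uM θ u := by rw [hpXsum, one_mul, hq1xy u]
  -- continuity of M
  have hMcont : Continuous M := by
    have haff : ∀ (a b : ℝ), Continuous (fun θ : ℝ => phi ((1 - θ) * a + θ * b)) := by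
      intro a b
      apply continuous_phi.comp
      exact ((continuous_const.sub continuous_id).mul continuous_const).add
        (continuous_id.mul continuous_const)
    have h1 : Continuous (fun θ => ent (uM θ)) := by
      have : (fun θ => ent (uM θ)) = fun θ => - ∑ u, phi ((1 - θ) * m0 u + θ * m1 u) := by
        funext θ; rw [ent_eq]
      rw [this]
      exact (continuous_finset_sum _ (fun u _ => haff (m0 u) (m1 u))).neg
    have h2 : Continuous (fun θ => ent (xuM θ)) := by
      have : (fun θ => ent (xuM θ)) = fun θ => - ∑ xu : X × Fin n,
          phi ((1 - θ) * (pX xu.1 * m0 xu.2) + θ * (∑ y, if yEmb y = xu.2 then p (xu.1, y) else 0)) := by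
        funext θ; rw [ent_eq]
      rw [this]
      exact (continuous_finset_sum _ (fun xu _ => haff _ _)).neg
    exact ((h1.add continuous_const).sub h2)
  -- endpoint values
  have hM0 : M 0 = 0 := by
    have huM0 : uM 0 = m0 := by funext u; simp [huMdef]
    have hxuM0 : xuM 0 = fun z : X × Fin n => pX z.1 * m0 z.2 := by
      funext z; simp [hxuMdef]
    rw [hMdef]
    simp only [huM0, hxuM0]
    rw [ent_prod pX m0 hpX0 hm00 hpXsum hm01]
    ring
  have hM1 : M 1 = ent pX + ent pY - ent p := by
    have huM1 : uM 1 = m1 := by funext u; simp [huMdef]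
    have he1 : ent m1 = ent pY := by
      rw [hm1def]; exact ent_comap yEmb hyEmb pY
    have hι : Function.Injective (fun z : X × Y => (z.1, yEmb z.2)) := by
      rintro ⟨a, b⟩ ⟨a', b'⟩ h
      simp only [Prod.mk.injEq] at h ⊢
      exact ⟨h.1, hyEmb h.2⟩
    have hxuM1 : xuM 1 = fun c : X × Fin n => ∑ z : X × Y, if (z.1, yEmb z.2) = c then p z else 0 := by
      funext c
      rw [hxuMdef]
      simp only [sub_self, zero_mul, one_mul, zero_add]
      rw [Fintype.sum_prod_type, Finset.sum_comm]
      apply Finset.sum_congr rfl; intro y _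
      have hred : ∀ x : X, (if ((x, y).1, yEmb (x, y).2) = c then p (x, y) else 0)
          = (if x = c.1 ∧ yEmb y = c.2 then p (x, y) else 0) := by
        intro x
        exact if_congr (by simp [Prod.ext_iff]) rfl rfl
      rw [Finset.sum_congr rfl (fun x _ => hred x)]
      by_cases h : yEmb y = c.2
      · simp [h]
      · simp [h]
    have he2 : ent (xuM 1) = ent p := by
      rw [hxuM1]
      exact ent_comap (fun z : X × Y => (z.1, yEmb z.2)) hι p
    rw [hMdef]
    simp only [huM1, he1, he2]
    ring
  -- IVT
  obtain ⟨θ, hθmem, hθ⟩ := intermediate_value_Icc (by norm_num : (0:ℝ) ≤ 1)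
    hMcont.continuousOn (by rw [hM0, hM1]; exact ⟨hε0, le_of_lt hεI⟩)
  obtain ⟨hθ0, hθ1⟩ := hθmem
  have h1θ : 0 ≤ 1 - θ := by linarith
  refine ⟨F θ, ?_, ?_, ?_, ?_, ?_⟩
  · intro z
    apply add_nonneg
    · apply mul_nonneg h1θ
      apply mul_nonneg (hpX0 _)
      apply Finset.sum_nonneg; intro c _
      split <;> [exact hμ0 c; exact le_refl 0]
    · apply mul_nonneg hθ0
      rw [hq1def]
      dsimp only
      split <;> [exact hpos _; exact le_refl 0]
  · have hmargF : ∀ x y, (∑ u, F θ (x, y, u)) = p (x, y) := by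
      intro x y
      rw [Finset.sum_add_distrib, ← Finset.mul_sum, ← Finset.mul_sum, hq0u x y, hq1u x y]
      ring
    calc ∑ z : X × Y × Fin n, F θ z
        = ∑ x, ∑ y, ∑ u, F θ (x, y, u) := by
          rw [Fintype.sum_prod_type]
          exact Finset.sum_congr rfl (fun x _ => by rw [Fintype.sum_prod_type])
      _ = ∑ x, ∑ y, p (x, y) := by
          exact Finset.sum_congr rfl (fun x _ => Finset.sum_congr rfl (fun y _ => hmargF x y))
      _ = 1 := by rw [← Fintype.sum_prod_type]; exact hsum
  · intro x y
    rw [Finset.sum_add_distrib, ← Finset.mul_sum, ← Finset.mul_sum, hq0u x y, hq1u x y]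
    ring
  · have e1 : (fun u => ∑ x, ∑ y, F θ (x, y, u)) = uM θ := funext (fun u => hMatch1 θ u)
    have e2 : (fun xu : X × Fin n => ∑ y, F θ (xu.1, y, xu.2)) = xuM θ := by
      funext xu; exact hMatch2 θ xu.1 xu.2
    rw [e1, e2]
    exact hθ
  · have hSupp : ∀ x y u, F θ (x, y, u) ≠ 0 → y = G x u := by
      intro x y u hF
      have : q0 (x, y, u) ≠ 0 ∨ q1 (x, y, u) ≠ 0 := by
        by_contra hc
        push_neg at hc
        apply hF
        rw [hFdef]; dsimp only; rw [hc.1, hc.2]; ring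
      rcases this with h | h
    -- q0 case
      · rw [hq0def] at h
        dsimp only at h
        have hx : pX x ≠ 0 := fun h0 => h (by rw [h0, zero_mul])
        have hS : (∑ c, if cEmb c = u ∧ g x c = y then μ c else 0) ≠ 0 := by
          intro h0; exact h (by rw [h0, mul_zero])
        obtain ⟨c, _, hc⟩ := Finset.exists_ne_zero_of_sum_ne_zero hS
        have hcond : cEmb c = u ∧ g x c = y := by
          by_contra hcc
          rw [if_neg hcc] at hc
          exact hc rfl
        rw [← hcond.2, ← hcond.1, hG0 x c hx]
      · rw [hq1def] at h
        dsimp only at h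
        have hcond : yEmb y = u := by
          by_contra hcc
          rw [if_neg hcc] at h
          exact h rfl
        have hp0 : p (x, y) ≠ 0 := by
          rw [if_pos hcond] at h; exact h
        rw [← hcond, hG1 x y hp0]
    have := ent_det (F θ) G hSupp
    rw [this]
    ring


lemma frl {X Y : Type*} [Fintype X] [Fintype Y] [DecidableEq X] [DecidableEq Y]
    (p : X × Y → ℝ) (hpos : ∀ z, 0 ≤ p z) (hsum : ∑ z, p z = 1)
    (pX : X → ℝ) (hpX : ∀ x, pX x = ∑ y, p (x, y)) :
    ∃ (K : ℕ) (μ : Fin K → ℝ) (g : X → Fin K → Y),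
      K ≤ Fintype.card X * (Fintype.card Y - 1) + 1 ∧
      (∀ c, 0 ≤ μ c) ∧ (∑ c, μ c = 1) ∧
      (∀ x y, pX x * (∑ c, if g x c = y then μ c else 0) = p (x, y)) ∧
      ((∃ f : Y → X, ∀ x y, p (x, y) ≠ 0 → f y = x) →
        ∃ L : Fin K → Y, Function.Injective L ∧ ∀ c x, p (x, L c) ≠ 0 → g x c = L c) := by
  classical
  have hXY : Nonempty (X × Y) := by
    by_contra h
    rw [not_nonempty_iff] at h
    rw [Finset.univ_eq_empty, Finset.sum_empty] at hsum; norm_num at hsum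
  obtain ⟨hXne, hYne⟩ := nonempty_prod.mp hXY
  set d := Fintype.card Y with hd
  have hd1 : 1 ≤ d := Fintype.card_pos
  set e := Fintype.equivFin Y with he
  have hpX0 : ∀ x, 0 ≤ pX x := by
    intro x; rw [hpX]; exact Finset.sum_nonneg (fun y _ => hpos _)
  have hple : ∀ x y, p (x, y) ≤ pX x := by
    intro x y; rw [hpX]
    exact Finset.single_le_sum (fun i _ => hpos (x, i)) (Finset.mem_univ y)
  have hpXsum : ∑ x, pX x = 1 := by
    rw [Finset.sum_congr rfl (fun x _ => hpX x), ← Fintype.sum_prod_type]; exact hsum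
  have hxex : ∃ x, pX x ≠ 0 := by
    by_contra h; push_neg at h
    rw [Finset.sum_congr rfl (fun x _ => h x), Finset.sum_const, smul_zero] at hpXsum
    norm_num at hpXsum
  -- cumulative conditional distribution function
  set Fx : X → ℕ → ℝ :=
    fun x m => (∑ y, if (e y : ℕ) < m then p (x, y) else 0) / pX x with hFx
  have hFx0 : ∀ x, Fx x 0 = 0 := by intro x; simp [hFx]
  have hFxd : ∀ x, pX x ≠ 0 → Fx x d = 1 := by
    intro x hx
    have h1 : (∑ y, if (e y : ℕ) < d then p (x, y) else 0) = pX x := by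
      rw [Finset.sum_congr rfl (fun y _ => if_pos (e y).isLt)]
      exact (hpX x).symm
    rw [hFx]; dsimp only; rw [h1, div_self hx]
  have hFxmono : ∀ x, Monotone (Fx x) := by
    intro x
    intro m m' hmm'
    by_cases hx : pX x = 0
    · simp [hFx, hx]
    · have hpXpos : 0 < pX x := lt_of_le_of_ne (hpX0 x) (Ne.symm hx)
      rw [hFx]
      dsimp only
      apply div_le_div_of_nonneg_right ?_ (hpX0 x)
      apply Finset.sum_le_sum
      intro y _
      by_cases h1 : (e y : ℕ) < m
      · rw [if_pos h1, if_pos (lt_of_lt_of_le h1 hmm')]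
      · rw [if_neg h1]
        split
        · exact hpos _
        · exact le_rfl
  have hFx01 : ∀ x m, 0 ≤ Fx x m ∧ Fx x m ≤ 1 := by
    intro x m
    constructor
    · apply div_nonneg ?_ (hpX0 x)
      apply Finset.sum_nonneg; intro y _
      split
      · exact hpos _
      · exact le_rfl
    · by_cases hx : pX x = 0
      · simp [hFx, hx]
      · have hpXpos : 0 < pX x := lt_of_le_of_ne (hpX0 x) (Ne.symm hx)
        rw [hFx]
        dsimp only
        rw [div_le_one hpXpos, hpX x]
        apply Finset.sum_le_sum
        intro y _
        split
        · exact le_rfl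
        · exact hpos _
  have hFxdiff : ∀ x, pX x ≠ 0 → ∀ j, (hj : j < d) → 
      pX x * (Fx x (j + 1) - Fx x j) = p (x, e.symm ⟨j, hj⟩) := by
    intro x hx j hj
    have hsplit : ∀ y : Y, (if (e y : ℕ) < j + 1 then p (x, y) else 0)
        = (if (e y : ℕ) < j then p (x, y) else 0) + (if y = e.symm ⟨j, hj⟩ then p (x, y) else 0) := by
      intro y
      have hiff : (y = e.symm ⟨j, hj⟩) ↔ ((e y : ℕ) = j) := by
        constructor
        · intro h; rw [h, Equiv.apply_symm_apply]
        · intro h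
          have : e y = ⟨j, hj⟩ := Fin.ext h
          rw [← this, Equiv.symm_apply_apply]
      by_cases h1 : (e y : ℕ) < j
      · rw [if_pos (Nat.lt_succ_of_lt h1), if_pos h1, if_neg, add_zero]
        intro hy; rw [hiff] at hy; omega
      · by_cases h2 : (e y : ℕ) = j
        · rw [if_pos (by omega), if_neg h1, if_pos (hiff.mpr h2), zero_add]
        · rw [if_neg (by omega), if_neg h1, if_neg (fun hy => h2 (hiff.mp hy)), add_zero]
    have hnum : (∑ y, if (e y : ℕ) < j + 1 then p (x, y) else 0)
        = (∑ y, if (e y : ℕ) < j then p (x, y) else 0) + p (x, e.symm ⟨j, hj⟩) := by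
      rw [Finset.sum_congr rfl (fun y _ => hsplit y), Finset.sum_add_distrib]
      congr 1
      rw [Finset.sum_ite_eq' Finset.univ (e.symm ⟨j, hj⟩) (fun y => p (x, y)),
        if_pos (Finset.mem_univ _)]
    rw [hFx]
    dsimp only
    rw [div_sub_div_same, hnum]
    rw [add_sub_cancel_left]
    rw [mul_div_cancel₀ _ hx]
  -- the cut-point set
  set ytop : Y := e.symm ⟨d - 1, by omega⟩ with hytop
  set S : Finset ℝ := insert 0 (insert 1 (((Finset.univ : Finset (X × Y)).filter
      (fun z => pX z.1 ≠ 0 ∧ (e z.2 : ℕ) + 1 < d)).image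
      (fun z => Fx z.1 ((e z.2 : ℕ) + 1)))) with hS
  have h0S : (0:ℝ) ∈ S := Finset.mem_insert_self _ _
  have h1S : (1:ℝ) ∈ S := Finset.mem_insert_of_mem (Finset.mem_insert_self _ _)
  have hScard : S.card ≤ Fintype.card X * (d - 1) + 2 := by
    have h1 : ((Finset.univ : Finset (X × Y)).filter
        (fun z => pX z.1 ≠ 0 ∧ (e z.2 : ℕ) + 1 < d)) ⊆
        (Finset.univ : Finset X) ×ˢ (Finset.univ.erase ytop) := by
      intro z hz
      obtain ⟨-, -, hz2⟩ := Finset.mem_filter.mp hz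
      rw [Finset.mem_product]
      refine ⟨Finset.mem_univ _, Finset.mem_erase.mpr ⟨?_, Finset.mem_univ _⟩⟩
      intro hzy
      rw [hytop] at hzy
      have : (e z.2 : ℕ) = d - 1 := by rw [hzy, Equiv.apply_symm_apply]
      omega
    have h2 : (((Finset.univ : Finset (X × Y)).filter
        (fun z => pX z.1 ≠ 0 ∧ (e z.2 : ℕ) + 1 < d)).image
        (fun z => Fx z.1 ((e z.2 : ℕ) + 1))).card ≤ Fintype.card X * (d - 1) := by
      apply le_trans (Finset.card_image_le)
      apply le_trans (Finset.card_le_card h1)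
      rw [Finset.card_product, Finset.card_univ, Finset.card_erase_of_mem (Finset.mem_univ _),
        Finset.card_univ]
    calc S.card ≤ _ + 1 := Finset.card_insert_le _ _
      _ ≤ (_ + 1) + 1 := by exact Nat.succ_le_succ (Finset.card_insert_le _ _)
      _ ≤ Fintype.card X * (d - 1) + 2 := by omega
  have hcut : ∀ x, pX x ≠ 0 → ∀ m, m ≤ d → Fx x m ∈ S := by
    intro x hx m hm
    rcases Nat.eq_zero_or_pos m with rfl | hmpos
    · rw [hFx0]; exact h0S
    rcases eq_or_lt_of_le hm with rfl | hlt
    · rw [hFxd x hx]; exact h1S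
    · apply Finset.mem_insert_of_mem
      apply Finset.mem_insert_of_mem
      apply Finset.mem_image.mpr
      refine ⟨(x, e.symm ⟨m - 1, by omega⟩), ?_, ?_⟩
      · rw [Finset.mem_filter]
        refine ⟨Finset.mem_univ _, hx, ?_⟩
        rw [Equiv.apply_symm_apply]
        dsimp only
        omega
      · rw [Equiv.apply_symm_apply]
        dsimp only
        congr 1
        omega
  have hSIcc : ∀ s ∈ S, 0 ≤ s ∧ s ≤ 1 := by
    intro s hs
    rw [hS] at hs
    rcases Finset.mem_insert.mp hs with rfl | hs
    · norm_num
    rcases Finset.mem_insert.mp hs with rfl | hs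
    · norm_num
    obtain ⟨z, _, rfl⟩ := Finset.mem_image.mp hs
    exact hFx01 z.1 _
  set m₀ := S.card with hm₀
  have hm₀2 : 2 ≤ m₀ := by
    apply Finset.one_lt_card.mpr
    exact ⟨0, h0S, 1, h1S, by norm_num⟩
  set iso := S.orderIsoOfFin rfl with hiso
  set T : ℕ → ℝ := fun i => if h : i < m₀ then (iso ⟨i, h⟩ : ℝ) else 1 with hT
  have hTmem : ∀ i, i < m₀ → T i ∈ S := by
    intro i hi; simp only [hT]; rw [dif_pos hi]; exact (iso ⟨i, hi⟩).2
  have hTmono : ∀ i j, i < j → j < m₀ → T i < T j := by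
    intro i j hij hj
    simp only [hT]; rw [dif_pos hj, dif_pos (lt_trans hij hj)]
    exact Subtype.coe_lt_coe.mpr (iso.strictMono (Fin.lt_def.mpr hij))
  have hT01 : ∀ i, 0 ≤ T i ∧ T i ≤ 1 := by
    intro i
    simp only [hT]
    split
    · exact hSIcc _ (iso ⟨i, by assumption⟩).2
    · norm_num
  have hT0 : T 0 = 0 := by
    have h1 : T 0 ∈ S := hTmem 0 (by omega)
    have h2 : T 0 ≤ 0 := by
      have : (iso.symm ⟨0, h0S⟩ : Fin m₀) = iso.symm ⟨0, h0S⟩ := rfl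
      have h3 : T 0 ≤ (iso (iso.symm ⟨0, h0S⟩) : ℝ) := by
        simp only [hT]
        rw [dif_pos (by omega : 0 < m₀)]
        apply Subtype.coe_le_coe.mpr
        apply iso.monotone
        exact Fin.le_def.mpr (Nat.zero_le _)
      rwa [OrderIso.apply_symm_apply] at h3
    exact le_antisymm h2 (hSIcc _ h1).1
  have hTtop : ∀ i, m₀ - 1 ≤ i → T i = 1 := by
    intro i hi
    rcases lt_or_ge i m₀ with h | h
    · have hieq : i = m₀ - 1 := by omega
      subst hieq
      have h2 : (1:ℝ) ≤ T (m₀ - 1) := by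
        have h3 : (iso (iso.symm ⟨1, h1S⟩) : ℝ) ≤ T (m₀ - 1) := by
          simp only [hT]
          rw [dif_pos (by omega : m₀ - 1 < m₀)]
          apply Subtype.coe_le_coe.mpr
          apply iso.monotone
          apply Fin.le_def.mpr
          have := (iso.symm ⟨1, h1S⟩).isLt
          simp only
          omega
        rwa [OrderIso.apply_symm_apply] at h3
      exact le_antisymm (hT01 _).2 h2
    · simp only [hT]
      rw [dif_neg (by omega)]
  have hTnext : ∀ (i : ℕ) (s : ℝ), s ∈ S → i + 1 < m₀ → T i < s → T (i + 1) ≤ s := by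
    intro i s hs hi1 hTis
    set k := iso.symm ⟨s, hs⟩ with hk
    have hsk : (iso k : ℝ) = s := by rw [hk, OrderIso.apply_symm_apply]
    have hik : (⟨i, by omega⟩ : Fin m₀) < k := by
      by_contra hc
      push_neg at hc
      have : (iso k : ℝ) ≤ T i := by
        simp only [hT]
        rw [dif_pos (by omega : i < m₀)]
        exact Subtype.coe_le_coe.mpr (iso.monotone hc)
      rw [hsk] at this
      linarith
    have : T (i + 1) ≤ (iso k : ℝ) := by
      simp only [hT]
      rw [dif_pos hi1]
      apply Subtype.coe_le_coe.mpr
      apply iso.monotone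
      apply Fin.le_def.mpr
      have := Fin.lt_def.mp hik
      simp only at this ⊢
      omega
    rwa [hsk] at this
  set K := m₀ - 1 with hK
  have hKm₀ : K < m₀ := by omega
  set μ : Fin K → ℝ := fun c => T ((c : ℕ) + 1) - T c with hμ
  have hcm : ∀ c : Fin K, (c : ℕ) + 1 < m₀ := by
    intro c; have := c.isLt; omega
  have hμpos : ∀ c, 0 < μ c := by
    intro c
    simp only [hμ]
    rw [sub_pos]
    exact hTmono _ _ (lt_add_one _) (hcm c)
  have hμ1 : ∑ c, μ c = 1 := by
    simp only [hμ]
    rw [Fin.sum_univ_eq_sum_range (fun i => T (i + 1) - T i) K,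
      Finset.sum_range_sub (fun i => T i) K, hT0, hTtop K (le_refl _), sub_zero]
  have hTlt1 : ∀ c : Fin K, T c < 1 := by
    intro c
    calc T (c : ℕ) < T ((c : ℕ) + 1) := hTmono _ _ (lt_add_one _) (hcm c)
      _ ≤ 1 := (hT01 _).2
  have hfind : ∀ (x : X) (c : Fin K), ∃ m, T (c : ℕ) < Fx x (m + 1) ∨ pX x = 0 := by
    intro x c
    by_cases hx : pX x = 0
    · exact ⟨0, Or.inr hx⟩
    · refine ⟨d - 1, Or.inl ?_⟩
      have : d - 1 + 1 = d := by omega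
      rw [this, hFxd x hx]
      exact hTlt1 c
  set idx : X → Fin K → ℕ := fun x c => Nat.find (hfind x c) with hidx
  have hidxlt : ∀ x c, idx x c < d := by
    intro x c
    have h1 : idx x c ≤ d - 1 := by
      apply Nat.find_le
      by_cases hx : pX x = 0
      · exact Or.inr hx
      · refine Or.inl ?_
        have : d - 1 + 1 = d := by omega
        rw [this, hFxd x hx]
        exact hTlt1 c
    omega
  set g : X → Fin K → Y := fun x c => e.symm ⟨idx x c, hidxlt x c⟩ with hg
  have hgub : ∀ (x : X) (c : Fin K), pX x ≠ 0 → T (c : ℕ) < Fx x (idx x c + 1) := by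
    intro x c hx
    have := Nat.find_spec (hfind x c)
    rcases this with h | h
    · exact h
    · exact absurd h hx
  have hglb : ∀ (x : X) (c : Fin K), pX x ≠ 0 → Fx x (idx x c) ≤ T (c : ℕ) := by
    intro x c hx
    rcases Nat.eq_zero_or_pos (idx x c) with h0 | hpos'
    · rw [h0, hFx0]
      exact (hT01 _).1
    · have hmin := Nat.find_min (hfind x c) (m := idx x c - 1) (Nat.sub_lt hpos' one_pos)
      push_neg at hmin
      rcases hmin with ⟨h1, -⟩
      · have : idx x c - 1 + 1 = idx x c := by omega
        rwa [this] at h1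
  have hcellub : ∀ (x : X) (c : Fin K), pX x ≠ 0 → T ((c : ℕ) + 1) ≤ Fx x (idx x c + 1) := by
    intro x c hx
    exact hTnext _ _ (hcut x hx _ (by have := hidxlt x c; omega)) (hcm c) (hgub x c hx)
  have hgiff : ∀ (x : X), pX x ≠ 0 → ∀ (c : Fin K) (j : ℕ), j < d →
      ((idx x c = j) ↔ (Fx x j ≤ T (c : ℕ) ∧ T ((c : ℕ) + 1) ≤ Fx x (j + 1))) := by
    intro x hx c j hj
    constructor
    · rintro rfl
      exact ⟨hglb _ _ hx, hcellub _ _ hx⟩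
    · rintro ⟨h1, h2⟩
      by_contra hne
      rcases lt_or_gt_of_ne hne with hlt | hgt
      · have hmono := hFxmono x (show idx x c + 1 ≤ j from hlt)
        have := hgub x c hx
        linarith [hmono.trans h1]
      · have h3 := hFxmono x (show j + 1 ≤ idx x c from hgt)
        have h4 := hglb x c hx
        have h5 : T (c : ℕ) < T ((c : ℕ) + 1) := hTmono _ _ (lt_add_one _) (hcm c)
        linarith
  have hgsum : ∀ x y, pX x * (∑ c, if g x c = y then μ c else 0) = p (x, y) := by
    intro x y
    by_cases hx : pX x = 0
    · have hp0 : p (x, y) = 0 := le_antisymm (by have := hple x y; rw [hx] at this; exact this) (hpos _)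
      rw [hx, zero_mul, hp0]
    · have hj : (e y : ℕ) < d := (e y).isLt
      set A := Fx x (e y : ℕ) with hA
      set B := Fx x ((e y : ℕ) + 1) with hB
      have hAB : A ≤ B := hFxmono x (Nat.le_succ _)
      have hA0 : 0 ≤ A := (hFx01 x _).1
      have hB1 : B ≤ 1 := (hFx01 x _).2
      have hcond : ∀ c : Fin K, (g x c = y) ↔ (A ≤ T (c : ℕ) ∧ T ((c : ℕ) + 1) ≤ B) := by
        intro c
        rw [hA, hB, ← hgiff x hx c _ hj]
        simp only [hg]
        constructor
        · intro h
          have : e.symm ⟨idx x c, hidxlt x c⟩ = y := h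
          have h2 : (⟨idx x c, hidxlt x c⟩ : Fin d) = e y := by
            rw [← this, Equiv.apply_symm_apply]
          exact congrArg Fin.val h2
        · intro h
          have : (⟨idx x c, hidxlt x c⟩ : Fin d) = e y := Fin.ext h
          rw [this, Equiv.symm_apply_apply]
      set clip : ℝ → ℝ := fun z => max A (min B z) with hclip
      have hterm : ∀ c : Fin K,
          (if g x c = y then μ c else 0) = clip (T ((c : ℕ) + 1)) - clip (T (c : ℕ)) := by
        intro c
        have hTc : T (c : ℕ) ≤ T ((c : ℕ) + 1) := le_of_lt (hTmono _ _ (lt_add_one _) (hcm c))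
        by_cases hc : g x c = y
        · rw [if_pos hc]
          obtain ⟨h1, h2⟩ := (hcond c).mp hc
          have e1 : clip (T (c : ℕ)) = T (c : ℕ) := by
            simp only [hclip]
            rw [min_eq_right (hTc.trans h2), max_eq_right h1]
          have e2 : clip (T ((c : ℕ) + 1)) = T ((c : ℕ) + 1) := by
            simp only [hclip]
            rw [min_eq_right h2, max_eq_right (h1.trans hTc)]
          rw [e1, e2]
        · rw [if_neg hc]
          have hnc := (not_iff_not.mpr (hcond c)).mp hc
          by_cases h1 : A ≤ T (c : ℕ)
          · have hB2 : B < T ((c : ℕ) + 1) := by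
              by_contra hh
              push_neg at hh
              exact hnc ⟨h1, hh⟩
            have hBc : B ≤ T (c : ℕ) := by
              by_contra hh
              push_neg at hh
              have := hTnext _ _ (hcut x hx _ (by omega)) (hcm c) hh
              rw [← hB] at this
              linarith
            have e1 : clip (T (c : ℕ)) = B := by
              simp only [hclip]
              rw [min_eq_left hBc, max_eq_right hAB]
            have e2 : clip (T ((c : ℕ) + 1)) = B := by
              simp only [hclip]
              rw [min_eq_left (hBc.trans hTc), max_eq_right hAB]
            rw [e1, e2, sub_self]
          · push_neg at h1
            have h2 : T ((c : ℕ) + 1) ≤ A := by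
              have := hTnext _ _ (hcut x hx _ (le_of_lt hj)) (hcm c) h1
              rwa [← hA] at this
            have e1 : clip (T (c : ℕ)) = A := by
              simp only [hclip]
              rw [min_eq_right (le_of_lt (lt_of_lt_of_le h1 hAB)), max_eq_left (le_of_lt h1)]
            have e2 : clip (T ((c : ℕ) + 1)) = A := by
              simp only [hclip]
              rw [min_eq_right (h2.trans hAB), max_eq_left h2]
            rw [e1, e2, sub_self]
      rw [Finset.sum_congr rfl (fun c _ => hterm c)]
      have htel : ∑ c : Fin K, (clip (T ((c : ℕ) + 1)) - clip (T (c : ℕ)))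
          = clip (T K) - clip (T 0) := by
        rw [Fin.sum_univ_eq_sum_range (fun i => clip (T (i + 1)) - clip (T i)) K]
        exact Finset.sum_range_sub (fun i => clip (T i)) K
      rw [htel, hT0, hTtop K (le_refl _)]
      have hc1 : clip 1 = B := by
        simp only [hclip]
        rw [min_eq_left hB1, max_eq_right hAB]
      have hc0 : clip 0 = A := by
        simp only [hclip]
        rw [min_eq_right (hA0.trans hAB), max_eq_left hA0]
      rw [hc1, hc0]
      have hdiff := hFxdiff x hx (e y : ℕ) hj
      rw [hA, hB]
      rw [hdiff]
      have heta : (⟨(e y : ℕ), hj⟩ : Fin d) = e y := Fin.eta (e y) hj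
      rw [heta, Equiv.symm_apply_apply]
  have hgpos : ∀ (x : X), pX x ≠ 0 → ∀ c, p (x, g x c) ≠ 0 := by
    intro x hx c
    have hge : μ c ≤ ∑ c', if g x c' = g x c then μ c' else 0 := by
      have h1 := Finset.single_le_sum (f := fun c' => if g x c' = g x c then μ c' else 0)
        (fun i _ => by split; exacts [le_of_lt (hμpos i), le_rfl]) (Finset.mem_univ c)
      simpa using h1
    have hpXpos : 0 < pX x := lt_of_le_of_ne (hpX0 x) (Ne.symm hx)
    have hpgt : 0 < pX x * ∑ c', if g x c' = g x c then μ c' else 0 :=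
      mul_pos hpXpos (lt_of_lt_of_le (hμpos c) hge)
    rw [hgsum x (g x c)] at hpgt
    exact ne_of_gt hpgt
  have hSDR : (∃ f : Y → X, ∀ x y, p (x, y) ≠ 0 → f y = x) →
      ∃ L : Fin K → Y, Function.Injective L ∧ ∀ c x, p (x, L c) ≠ 0 → g x c = L c := by
    rintro ⟨f, hf⟩
    obtain ⟨x₀, hx₀⟩ := hxex
    have hwit : ∀ c : Fin K, ∃ x, pX x ≠ 0 ∧ (T (c : ℕ) = 0 ∨ ∃ m, T (c : ℕ) = Fx x m) := by
      intro c
      have hmem : T (c : ℕ) ∈ S := hTmem _ (by have := c.isLt; omega)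
      have hlt1 : T (c : ℕ) < 1 := hTlt1 c
      rw [hS] at hmem
      rcases Finset.mem_insert.mp hmem with h0 | hmem
      · exact ⟨x₀, hx₀, Or.inl h0⟩
      rcases Finset.mem_insert.mp hmem with h1 | hmem
      · exact absurd h1 (ne_of_lt hlt1)
      obtain ⟨z, hz, hzq⟩ := Finset.mem_image.mp hmem
      exact ⟨z.1, (Finset.mem_filter.mp hz).2.1, Or.inr ⟨_, hzq.symm⟩⟩
    choose xw hxw1 hxw2 using hwit
    set L : Fin K → Y := fun c => g (xw c) c with hL
    have hLrep : ∀ c, p (xw c, L c) ≠ 0 := fun c => hgpos _ (hxw1 c) c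
    have hkey : ∀ (c : Fin K) (x : X), p (x, L c) ≠ 0 → g x c = L c := by
      intro c x hp0
      have h1 : f (L c) = x := hf _ _ hp0
      have h2 : f (L c) = xw c := hf _ _ (hLrep c)
      rw [hL]
      rw [show x = xw c by rw [← h1, h2]]
    have hlem : ∀ c c' : Fin K, c < c' → L c = L c' → False := by
      intro c c' hlt hLL
      have hx'0 : pX (xw c') ≠ 0 := hxw1 c'
      have h2 : p (xw c', L c) ≠ 0 := by rw [hLL]; exact hLrep c'
      -- g (xw c') c = L c
      have hgc : g (xw c') c = L c := hkey c (xw c') h2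
      -- idx equality
      have hidxeq : idx (xw c') c' = idx (xw c') c := by
        have hy : g (xw c') c' = g (xw c') c := by rw [hgc, hLL]
        simp only [hg] at hy
        have := e.symm.injective hy
        exact congrArg Fin.val this
      have hposc' : 0 < T (c' : ℕ) := by
        have : T 0 < T (c' : ℕ) := by
          apply hTmono
          · have h3 : (c : ℕ) < (c' : ℕ) := hlt
            omega
          · have := c'.isLt; omega
        rwa [hT0] at this
      rcases hxw2 c' with h0 | ⟨m, hm⟩
      · rw [h0] at hposc'; exact lt_irrefl _ hposc'
      · set j := idx (xw c') c with hj
        have hb1 : Fx (xw c') j ≤ T (c : ℕ) := hglb _ _ hx'0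
        have hb2 : T (c' : ℕ) < Fx (xw c') (j + 1) := by
          have := hgub (xw c') c' hx'0
          rwa [hidxeq] at this
        have hcc' : T (c : ℕ) < T (c' : ℕ) := by
          apply hTmono
          · exact hlt
          · have := c'.isLt; omega
        rcases le_or_gt m j with hmj | hmj
        · have h5 := hFxmono (xw c') hmj
          rw [← hm] at h5
          linarith
        · have h5 := hFxmono (xw c') (show j + 1 ≤ m from hmj)
          rw [← hm] at h5
          linarith
    refine ⟨L, ?_, hkey⟩
    intro c c' hcc
    by_contra hne
    rcases lt_or_gt_of_ne hne with h | h
    · exact hlem c c' h hcc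
    · exact hlem c' c h hcc.symm
  refine ⟨K, μ, g, ?_, fun c => le_of_lt (hμpos c), hμ1, hgsum, hSDR⟩
  have : S.card ≤ Fintype.card X * (d - 1) + 2 := hScard
  omega

end Stmt10

/-- Extended Functional Representation Lemma with cardinality bound: for `0 ≤ ε < I(X;Y)`
there exists `U` with `I(U;X) = ε`, `H(Y|U,X) = 0` and
`|𝒰| ≤ (|𝒳|(|𝒴|−1)+1)(|𝒳|+1)`; moreover, if `X` is a deterministic function of `Y`, `U` can be
chosen with `|𝒰| ≤ (|𝒴|−|𝒳|+1)(|𝒳|+1)`. -/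
theorem stmt10 {X Y : Type*} [Fintype X] [Fintype Y]
    (p : X × Y → ℝ) (hpos : ∀ z, 0 ≤ p z) (hsum : ∑ z, p z = 1)
    (pX : X → ℝ) (hpX : ∀ x, pX x = ∑ y, p (x, y))
    (pY : Y → ℝ) (hpY : ∀ y, pY y = ∑ x, p (x, y))
    (ε : ℝ) (hε0 : 0 ≤ ε)
    -- ε < I(X;Y)
    (hεI : ε < ent pX + ent pY - ent p) :
    (∃ (n : ℕ) (q : X × Y × Fin n → ℝ),
      (∀ z, 0 ≤ q z) ∧ (∑ z, q z = 1) ∧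
      (∀ x y, (∑ u, q (x, y, u)) = p (x, y)) ∧
      -- I(U;X) = ε
      (ent (fun u => ∑ x, ∑ y, q (x, y, u))
        + ent pX
        - ent (fun xu : X × Fin n => ∑ y, q (xu.1, y, xu.2)) = ε) ∧
      -- H(Y|U,X) = 0
      (ent q - ent (fun xu : X × Fin n => ∑ y, q (xu.1, y, xu.2)) = 0) ∧
      n ≤ (Fintype.card X * (Fintype.card Y - 1) + 1) * (Fintype.card X + 1)) ∧
    -- moreover, if X is a deterministic function of Y:
    ((∃ f : Y → X, ∀ x y, p (x, y) ≠ 0 → f y = x) →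
      ∃ (n : ℕ) (q : X × Y × Fin n → ℝ),
        (∀ z, 0 ≤ q z) ∧ (∑ z, q z = 1) ∧
        (∀ x y, (∑ u, q (x, y, u)) = p (x, y)) ∧
        (ent (fun u => ∑ x, ∑ y, q (x, y, u))
          + ent pX
          - ent (fun xu : X × Fin n => ∑ y, q (xu.1, y, xu.2)) = ε) ∧
        (ent q - ent (fun xu : X × Fin n => ∑ y, q (xu.1, y, xu.2)) = 0) ∧
        n ≤ (Fintype.card Y - Fintype.card X + 1) * (Fintype.card X + 1)) := by
  classical
  have hXY : Nonempty (X × Y) := by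
    by_contra h
    rw [not_nonempty_iff] at h
    rw [Finset.univ_eq_empty, Finset.sum_empty] at hsum; norm_num at hsum
  obtain ⟨hXne, hYne⟩ := nonempty_prod.mp hXY
  set d := Fintype.card Y with hd
  set cX := Fintype.card X with hcX
  have hd1 : 1 ≤ d := Fintype.card_pos
  have hcX1 : 1 ≤ cX := Fintype.card_pos
  set e := Fintype.equivFin Y with he
  obtain ⟨K, μ, g, hK, hμ0, hμ1, hg, hSDR⟩ := Stmt10.frl p hpos hsum pX hpX
  constructor
  · -- part 1 : disjoint union embedding
    set n := K + d with hn
    have hcEmblt : ∀ c : Fin K, (c : ℕ) < n := by intro c; have := c.isLt; omega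
    set cEmb : Fin K → Fin n := fun c => ⟨c, hcEmblt c⟩ with hcEmb
    have hyEmblt : ∀ y : Y, K + (e y : ℕ) < n := by intro y; have := (e y).isLt; omega
    set yEmb : Y → Fin n := fun y => ⟨K + (e y : ℕ), hyEmblt y⟩ with hyEmb
    have hyEmbInj : Function.Injective yEmb := by
      intro y y' hyy
      simp only [hyEmb, Fin.mk.injEq] at hyy
      have : e y = e y' := Fin.ext (by omega)
      exact e.injective this
    set G : X → Fin n → Y := fun x u =>
      if h : (u : ℕ) < K then g x ⟨u, h⟩ else e.symm ⟨(u : ℕ) - K, by have := u.isLt; omega⟩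
      with hG
    have hG0 : ∀ x c, pX x ≠ 0 → G x (cEmb c) = g x c := by
      intro x c _
      simp only [hG, hcEmb]
      rw [dif_pos c.isLt]
    have hG1 : ∀ x y, p (x, y) ≠ 0 → G x (yEmb y) = y := by
      intro x y _
      simp only [hG, hyEmb]
      rw [dif_neg (by omega)]
      have h1 : K + (e y : ℕ) - K = (e y : ℕ) := by omega
      have h2 : (⟨K + (e y : ℕ) - K, by have := (e y).isLt; omega⟩ : Fin d) = e y := by
        apply Fin.ext; simp only; omega
      rw [h2, Equiv.symm_apply_apply]
    obtain ⟨q, hq1, hq2, hq3, hq4, hq5⟩ := Stmt10.master p hpos hsum pX hpX pY hpY ε hε0 hεI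
      n K μ hμ0 hμ1 g hg cEmb yEmb hyEmbInj G hG0 hG1
    refine ⟨n, q, hq1, hq2, hq3, hq4, hq5, ?_⟩
    rw [← hd, ← hcX] at hK
    have h3 : d ≤ cX * (d - 1) + 1 := by
      have : d - 1 ≤ cX * (d - 1) := Nat.le_mul_of_pos_left _ (by omega)
      omega
    have h4 : cX * (d - 1) + 1 ≤ (cX * (d - 1) + 1) * cX := Nat.le_mul_of_pos_right _ (by omega)
    have h5 : (cX * (d - 1) + 1) * (cX + 1) = (cX * (d - 1) + 1) * cX + (cX * (d - 1) + 1) := by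
      ring
    omega
  · -- part 2 : merged embedding via SDR
    intro hdet
    obtain ⟨L, hLinj, hLkey⟩ := hSDR hdet
    set yEmb : Y → Fin d := fun y => e y with hyEmb
    have hyEmbInj : Function.Injective yEmb := e.injective
    set cEmb : Fin K → Fin d := fun c => e (L c) with hcEmb
    set G : X → Fin d → Y := fun x u =>
      if h : ∃ c, e (L c) = u then g x h.choose else e.symm u with hG
    have hG0 : ∀ x c, pX x ≠ 0 → G x (cEmb c) = g x c := by
      intro x c _
      simp only [hG, hcEmb]
      have hex : ∃ c', e (L c') = e (L c) := ⟨c, rfl⟩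
      rw [dif_pos hex]
      have hc := hex.choose_spec
      have : hex.choose = c := hLinj (e.injective hc)
      rw [this]
    have hG1 : ∀ x y, p (x, y) ≠ 0 → G x (yEmb y) = y := by
      intro x y hp0
      simp only [hG, hyEmb]
      by_cases hex : ∃ c, e (L c) = e y
      · rw [dif_pos hex]
        have hc := hex.choose_spec
        have hLc : L hex.choose = y := e.injective hc
        have := hLkey hex.choose x (by rw [hLc]; exact hp0)
        rw [this, hLc]
      · rw [dif_neg hex, Equiv.symm_apply_apply]
    obtain ⟨q, hq1, hq2, hq3, hq4, hq5⟩ := Stmt10.master p hpos hsum pX hpX pY hpY ε hε0 hεI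
      d K μ hμ0 hμ1 g hg cEmb yEmb hyEmbInj G hG0 hG1
    refine ⟨d, q, hq1, hq2, hq3, hq4, hq5, ?_⟩
    have h4 : (d - cX + 1) * (cX + 1) = (d - cX) * cX + (d - cX) + cX + 1 := by ring
    have h5 : 0 ≤ (d - cX) * cX := Nat.zero_le _
    omega
end
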